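/- arXiv:2012.07402 — 5 statements merged into one kernel-verified Lean document; each statement's English description precedes it below -/
import Mathlib

section
/- Suppose Φ : GL_n(F) → N is a continuous map such that Φ(g·p) = Φ(g) for all g ∈ GL_n(F) and p ∈ P, and such that for every g ∈ GL_n(F) there exists an element c(g) ∈ N with Φ(g·g') = c(g) + Φ(g') for all g' ∈ GL_n(F). Then Φ is constant. (Under the identification of the Grassmannian Gr_{r,n}(F) with GL_n(F)/P, this says that the group of PGL_n(F)-invariants of the generalized Steinberg representation v_r(N) = C(Gr_{r,n}(F), N)/N is zero.) -/
open Matrix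

/-- A transvection struct as a unit of the matrix ring. -/
def tsUnit {F : Type*} [Field F] {ι : Type*} [DecidableEq ι] [Fintype ι]
    (t : Matrix.TransvectionStruct ι F) : GL ι F :=
  ⟨t.toMatrix, t.inv.toMatrix, t.mul_inv, t.inv_mul⟩

/-- An invertible diagonal matrix as a unit. -/
def diagUnit {F : Type*} [Field F] {ι : Type*} [DecidableEq ι] [Fintype ι]
    (D : ι → F) (hD : ∀ i, D i ≠ 0) : GL ι F :=
  ⟨diagonal D, diagonal (fun i => (D i)⁻¹), by
      rw [diagonal_mul_diagonal]
      convert diagonal_one with i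
      exact mul_inv_cancel₀ (hD i), by
      rw [diagonal_mul_diagonal]
      convert diagonal_one with i
      exact inv_mul_cancel₀ (hD i)⟩

lemma diag_conj_transvection {F : Type*} [Field F] {m : ℕ} (i j : Fin m) (hij : i ≠ j)
    (t μ : F) (ht : t ≠ 0) :
    Matrix.diagonal (fun k => if k = i then t else 1) * Matrix.transvection i j μ *
      Matrix.diagonal (fun k => if k = i then t⁻¹ else 1) = Matrix.transvection i j (t * μ) := by
  ext a b
  rw [Matrix.mul_diagonal, Matrix.diagonal_mul]
  simp only [Matrix.transvection, Matrix.add_apply, Matrix.one_apply, Matrix.single,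
    Matrix.of_apply]
  by_cases hab : a = b
  · subst hab
    have hnot : ¬(i = a ∧ j = a) := fun h => hij (h.1.trans h.2.symm)
    by_cases hai : a = i
    · simp [hai, hnot, hij.symm, mul_inv_cancel₀ ht]
    · simp [hai, hnot]
  · by_cases hc : i = a ∧ j = b
    · obtain ⟨hia, hjb⟩ := hc
      have hbi : b ≠ i := fun h => hij ((hjb.trans h).symm ▸ rfl)
      simp [← hia, ← hjb, hab, hbi, hij, hij.symm]
    · simp [hab, hc]


/-- The submodule of `Fin n → F` spanned by the first `r` standard basis vectors. -/
def stdFlag (F : Type*) [Field F] (n r : ℕ) : Submodule F (Fin n → F) where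
  carrier := {v | ∀ i : Fin n, r ≤ (i : ℕ) → v i = 0}
  add_mem' := fun {a b} ha hb i hi => by simp [ha i hi, hb i hi]
  zero_mem' := fun i _ => rfl
  smul_mem' := fun c {v} hv i hi => by simp [hv i hi]

/-- The block upper-triangularity condition cutting out the maximal parabolic of type
`(r, n-r)`: the `(i,j)` entry vanishes whenever `i ≥ r` and `j < r`. -/
def IsParMat {F : Type*} [Field F] {n : ℕ} (r : ℕ) (M : Matrix (Fin n) (Fin n) F) : Prop :=
  ∀ i j : Fin n, r ≤ (i : ℕ) → (j : ℕ) < r → M i j = 0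

lemma isParMat_iff_mapsTo {F : Type*} [Field F] {n r : ℕ} {M : Matrix (Fin n) (Fin n) F} :
    IsParMat r M ↔ ∀ v ∈ stdFlag F n r, M.mulVec v ∈ stdFlag F n r := by
  constructor
  · intro h v hv i hi
    simp only [Matrix.mulVec, dotProduct]
    refine Finset.sum_eq_zero fun j _ => ?_
    rcases lt_or_ge (j : ℕ) r with hj | hj
    · rw [h i j hi hj, zero_mul]
    · rw [hv j hj, mul_zero]
  · intro h i j hi hj
    have hmem : (Pi.single j (1 : F)) ∈ stdFlag F n r := by
      intro k hk
      apply Pi.single_eq_of_ne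
      intro hkj
      rw [hkj] at hk
      omega
    have h2 := h _ hmem i hi
    rw [Matrix.mulVec_single] at h2
    simpa using h2

/-- The maximal parabolic subgroup of `GL_n(F)` of type `(r, n-r)`: block upper-triangular
invertible matrices, i.e. the stabilizer of the span of the first `r` standard basis vectors. -/
def Parabolic (F : Type*) [Field F] (n r : ℕ) : Subgroup (GL (Fin n) F) where
  carrier := {g | IsParMat r (g : Matrix (Fin n) (Fin n) F)}
  one_mem' := by
    intro i j hi hj
    have hne : i ≠ j := by
      intro h; rw [h] at hi; omega
    exact Matrix.one_apply_ne hne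
  mul_mem' := by
    intro a b ha hb i j hi hj
    show ((a : Matrix (Fin n) (Fin n) F) * b) i j = 0
    rw [Matrix.mul_apply]
    refine Finset.sum_eq_zero fun k _ => ?_
    rcases lt_or_ge (k : ℕ) r with hk | hk
    · rw [ha i k hi hk, zero_mul]
    · rw [hb k j hk hj, mul_zero]
  inv_mem' := by
    intro g hg
    have hres : ∀ v ∈ stdFlag F n r,
        (Matrix.toLin' (g : Matrix (Fin n) (Fin n) F)) v ∈ stdFlag F n r := by
      intro v hv
      simpa [Matrix.toLin'_apply] using isParMat_iff_mapsTo.mp hg v hv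
    set f := (Matrix.toLin' (g : Matrix (Fin n) (Fin n) F)).restrict hres with hf
    have hginj : Function.Injective ((g : Matrix (Fin n) (Fin n) F).mulVec) :=
      Matrix.mulVec_injective_iff_isUnit.mpr ⟨g, rfl⟩
    have hinj : Function.Injective f := by
      intro x y hxy
      apply Subtype.ext
      apply hginj
      have h3 := congrArg Subtype.val hxy
      simpa [hf, LinearMap.restrict_apply, Matrix.toLin'_apply] using h3
    have hsurj := (LinearMap.injective_iff_surjective (f := f)).mp hinj
    rw [Set.mem_setOf_eq, isParMat_iff_mapsTo]
    intro v hv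
    obtain ⟨w, hw⟩ := hsurj ⟨v, hv⟩
    have hw' : (g : Matrix (Fin n) (Fin n) F).mulVec w.1 = v := by
      have h4 := congrArg Subtype.val hw
      simpa [hf, LinearMap.restrict_apply, Matrix.toLin'_apply] using h4
    have hcalc : ((g⁻¹ : GL (Fin n) F) : Matrix (Fin n) (Fin n) F).mulVec v = w.1 := by
      rw [← hw', Matrix.mulVec_mulVec, ← Units.val_mul, inv_mul_cancel, Units.val_one,
        Matrix.one_mulVec]
    rw [hcalc]
    exact w.2

/-- A continuous right-`P`-invariant function on `GL_n(F)` which is a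
"quasi-homomorphism" (each left translate differs from it by a constant) is constant:
the `PGL_n(F)`-invariants of the generalized Steinberg representation
`v_r(N) = C(Gr_{r,n}(F), N)/N` vanish. -/
theorem steinberg_invariants_eq_zero
    {F : Type*} [NontriviallyNormedField F] [IsUltrametricDist F]
    [CompleteSpace F] [LocallyCompactSpace F]
    {n r : ℕ} (hn : 2 ≤ n) (hr : 0 < r) (hrn : r < n)
    {N : Type*} [AddCommGroup N] [TopologicalSpace N] [IsTopologicalAddGroup N]
    (Φ : GL (Fin n) F → N) (hΦcont : Continuous Φ)
    (hright : ∀ g p : GL (Fin n) F, p ∈ Parabolic F n r → Φ (g * p) = Φ g)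
    (hquasi : ∀ g : GL (Fin n) F, ∃ c : N, ∀ g' : GL (Fin n) F, Φ (g * g') = c + Φ g') :
    ∀ g g' : GL (Fin n) F, Φ g = Φ g' := by
  obtain ⟨t, ht1⟩ := NormedField.exists_one_lt_norm F
  have ht0 : t ≠ 0 := by intro h; rw [h, norm_zero] at ht1; linarith
  have htne1 : t ≠ 1 := by intro h; rw [h, norm_one] at ht1; exact lt_irrefl _ ht1
  set Ψ : GL (Fin n) F → N := fun g => Φ g - Φ 1 with hΨ
  have hmul : ∀ a b : GL (Fin n) F, Ψ (a * b) = Ψ a + Ψ b := by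
    intro a b
    obtain ⟨c, hc⟩ := hquasi a
    have h1 := hc 1
    rw [mul_one] at h1
    simp only [hΨ]
    rw [hc b, h1]
    abel
  have hone : Ψ 1 = 0 := by simp [hΨ]
  have hinv : ∀ a : GL (Fin n) F, Ψ a⁻¹ = -Ψ a := by
    intro a
    have h : Ψ a⁻¹ + Ψ a = 0 := by rw [← hmul, inv_mul_cancel, hone]
    exact eq_neg_of_add_eq_zero_left h
  have hP : ∀ p ∈ Parabolic F n r, Ψ p = 0 := by
    intro p hp
    have h := hright 1 p hp
    rw [one_mul] at h
    simp [hΨ, h]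
  have hts : ∀ s : Matrix.TransvectionStruct (Fin n) F, Ψ (tsUnit s) = 0 := by
    intro s
    obtain ⟨i, j, hij, c⟩ := s
    have ht1' : t - 1 ≠ 0 := sub_ne_zero.mpr htne1
    set μ : F := c / (t - 1) with hμ
    have hD : ∀ k : Fin n, (if k = i then t else 1 : F) ≠ 0 := by
      intro k; split_ifs <;> simp [ht0]
    set d : GL (Fin n) F := diagUnit _ hD with hd
    have key : tsUnit ⟨i, j, hij, c⟩ =
        d * tsUnit ⟨i, j, hij, μ⟩ * d⁻¹ * (tsUnit ⟨i, j, hij, μ⟩)⁻¹ := by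
      apply Units.ext
      simp only [Units.val_mul]
      have h1 : ((d⁻¹ : GL (Fin n) F) : Matrix (Fin n) (Fin n) F) =
          Matrix.diagonal (fun k => if k = i then t⁻¹ else 1) := by
        have hfun : (fun k : Fin n => (if k = i then t else 1 : F)⁻¹) =
            (fun k : Fin n => if k = i then t⁻¹ else 1) := by
          funext k
          split_ifs <;> simp
        show Matrix.diagonal (fun k : Fin n => (if k = i then t else 1 : F)⁻¹) = _
        rw [hfun]
      have h2 : (((tsUnit ⟨i, j, hij, μ⟩)⁻¹ : GL (Fin n) F) : Matrix (Fin n) (Fin n) F) =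
          Matrix.transvection i j (-μ) := rfl
      have h3 : ((d : GL (Fin n) F) : Matrix (Fin n) (Fin n) F) =
          Matrix.diagonal (fun k => if k = i then t else 1) := rfl
      have h4 : ((tsUnit ⟨i, j, hij, μ⟩ : GL (Fin n) F) : Matrix (Fin n) (Fin n) F) =
          Matrix.transvection i j μ := rfl
      rw [h1, h2, h3, h4, diag_conj_transvection i j hij t μ ht0,
        Matrix.transvection_mul_transvection_same _ _ hij]
      have htc : t * μ + -μ = c := by
        rw [hμ]
        field_simp
        ring
      rw [htc]
      rfl
    rw [key, hmul, hmul, hmul, hinv, hinv]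
    abel
  have hlist : ∀ L : List (Matrix.TransvectionStruct (Fin n) F),
      Ψ (L.map tsUnit).prod = 0 := by
    intro L
    induction L with
    | nil => simpa using hone
    | cons a L ih => rw [List.map_cons, List.prod_cons, hmul, hts, ih, add_zero]
  have hcoe : ∀ L : List (Matrix.TransvectionStruct (Fin n) F),
      ((L.map tsUnit).prod : Matrix (Fin n) (Fin n) F) =
        (L.map Matrix.TransvectionStruct.toMatrix).prod := by
    intro L
    rw [← Units.coeHom_apply, map_list_prod, List.map_map]
    rfl
  have hzero : ∀ g : GL (Fin n) F, Ψ g = 0 := by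
    intro g
    obtain ⟨L, L', D, hdec⟩ :=
      Matrix.Pivot.exists_list_transvec_mul_diagonal_mul_list_transvec
        (g : Matrix (Fin n) (Fin n) F)
    have hg : ((g : Matrix (Fin n) (Fin n) F)).det ≠ 0 :=
      ((Matrix.isUnit_iff_isUnit_det _).mp g.isUnit).ne_zero
    have hdet : (Matrix.diagonal D).det ≠ 0 := by
      rw [hdec, Matrix.det_mul, Matrix.det_mul,
        Matrix.TransvectionStruct.det_toMatrix_prod, Matrix.TransvectionStruct.det_toMatrix_prod,
        one_mul, mul_one] at hg
      exact hg
    have hDk : ∀ k, D k ≠ 0 := by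
      intro k hk
      apply hdet
      rw [Matrix.det_diagonal]
      exact Finset.prod_eq_zero (Finset.mem_univ k) hk
    have hgu : g = (L.map tsUnit).prod * diagUnit D hDk * (L'.map tsUnit).prod := by
      apply Units.ext
      rw [hdec]
      simp only [Units.val_mul, hcoe]
      rfl
    have hdiagP : diagUnit D hDk ∈ Parabolic F n r := by
      intro i j hi hj
      exact Matrix.diagonal_apply_ne D (Fin.ne_of_val_ne (by omega))
    rw [hgu, hmul, hmul, hlist, hlist, hP _ hdiagP]
    abel
  intro g g'
  have h1 := hzero g
  have h2 := hzero g'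
  simp only [hΨ, sub_eq_zero] at h1 h2
  rw [h1, h2]
end

section
/- There exist finitely many closed subsets U₁, …, U_m of GL_n(F) such that for each i the multiplication map U_i × P → GL_n(F), (u,p) ↦ u·p, is injective and a homeomorphism onto its image, the images U_i·P are open in GL_n(F) and pairwise disjoint, and their union is all of GL_n(F). -/
open Matrix

namespace ParSec

variable {F : Type*} [Field F] {n r : ℕ}

lemma sum_fin_split (hrn : r ≤ n) {M : Type*} [AddCommMonoid M] (f : Fin n → M) :
    ∑ i, f i = (∑ i : Fin r, f (Fin.castLE hrn i)) +
      ∑ i : Fin (n - r), f ⟨r + i, by omega⟩ := by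
  classical
  set f' : ℕ → M := fun k => if h : k < n then f ⟨k, h⟩ else 0 with hf'
  have h1 : ∑ i, f i = ∑ k ∈ Finset.range n, f' k := by
    rw [← Fin.sum_univ_eq_sum_range]
    exact Finset.sum_congr rfl fun i _ => by simp [hf', i.isLt]
  have h2 : ∑ k ∈ Finset.range r, f' k = ∑ i : Fin r, f (Fin.castLE hrn i) := by
    rw [← Fin.sum_univ_eq_sum_range]
    exact Finset.sum_congr rfl fun i _ => by
      have : (i : ℕ) < n := lt_of_lt_of_le i.isLt hrn
      simp [hf', this]; rfl
  have h3 : ∑ k ∈ Finset.Ico r n, f' k = ∑ i : Fin (n - r), f ⟨r + i, by omega⟩ := by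
    rw [Finset.sum_Ico_eq_sum_range, ← Fin.sum_univ_eq_sum_range]
    exact Finset.sum_congr rfl fun i _ => by
      have : r + (i : ℕ) < n := by omega
      simp [hf', this]
  rw [h1, Finset.range_eq_Ico, ← Finset.sum_Ico_consecutive _ (Nat.zero_le r) hrn,
    ← Finset.range_eq_Ico, h2, h3]

lemma sum_fin_trunc (hrn : r ≤ n) {M : Type*} [AddCommMonoid M] (f : Fin n → M)
    (hf : ∀ i : Fin n, r ≤ (i : ℕ) → f i = 0) :
    ∑ i, f i = ∑ i : Fin r, f (Fin.castLE hrn i) := by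
  rw [sum_fin_split hrn f]
  have : (∑ i : Fin (n - r), f ⟨r + i, by omega⟩) = 0 :=
    Finset.sum_eq_zero fun i _ => hf _ (by simp)
  rw [this, add_zero]

/-- Extension of a vector on `Fin r` by zero to `Fin n`. -/
def ext (hrn : r ≤ n) (x : Fin r → F) : Fin n → F :=
  fun i => if h : (i : ℕ) < r then x ⟨i, h⟩ else 0

lemma ext_castLE (hrn : r ≤ n) (x : Fin r → F) (j : Fin r) :
    ext hrn x (Fin.castLE hrn j) = x j := by
  simp [ext, j.isLt]

lemma ext_high (hrn : r ≤ n) (x : Fin r → F) (i : Fin n) (hi : r ≤ (i : ℕ)) :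
    ext hrn x i = 0 := by
  simp [ext, Nat.not_lt.mpr hi]

lemma mulVec_ext (hrn : r ≤ n) (M : Matrix (Fin n) (Fin n) F) (x : Fin r → F) :
    M *ᵥ ext hrn x = (M.submatrix id (Fin.castLE hrn)) *ᵥ x := by
  funext i
  simp only [Matrix.mulVec, dotProduct, Matrix.submatrix_apply, id_eq]
  rw [sum_fin_trunc hrn (fun k => M i k * ext hrn x k)
    (fun k hk => by show M i k * ext hrn x k = 0; rw [ext_high hrn x k hk, mul_zero])]
  exact Finset.sum_congr rfl fun j _ => by rw [ext_castLE]

/-- Multiplying on the right by a block-upper-triangular matrix acts on the first `r`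
columns by right multiplication by the upper-left block. -/
lemma submatrix_mul_par (hrn : r ≤ n) {α : Type*} (g p : Matrix (Fin n) (Fin n) F)
    (hp : IsParMat r p) (f : α → Fin n) :
    (g * p).submatrix f (Fin.castLE hrn) =
      (g.submatrix f (Fin.castLE hrn)) * (p.submatrix (Fin.castLE hrn) (Fin.castLE hrn)) := by
  ext i j
  simp only [Matrix.submatrix_apply, Matrix.mul_apply]
  rw [sum_fin_trunc hrn (fun k => g (f i) k * p k (Fin.castLE hrn j))
    (fun k hk => by
      show g (f i) k * p k (Fin.castLE hrn j) = 0
      rw [hp k (Fin.castLE hrn j) hk j.isLt, mul_zero])]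


variable (F n r) in
/-- Index type: subsets of rows of size `r`. -/
abbrev Idx := {S : Finset (Fin n) // S.card = r}

/-- The `S`-rows minor of the first `r` columns. -/
noncomputable def minor (hrn : r ≤ n) (S : Idx n r) (g : Matrix (Fin n) (Fin n) F) : F :=
  (g.submatrix (S.1.orderEmbOfFin S.2) (Fin.castLE hrn)).det

lemma minor_mul_par (hrn : r ≤ n) (S : Idx n r) (g p : Matrix (Fin n) (Fin n) F)
    (hp : IsParMat r p) :
    minor hrn S (g * p) =
      minor hrn S g * (p.submatrix (Fin.castLE hrn) (Fin.castLE hrn)).det := by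
  unfold minor
  rw [submatrix_mul_par hrn g p hp, Matrix.det_mul]

/-- Every invertible matrix has a nonzero `r`-minor in its first `r` columns. -/
lemma exists_minor_ne_zero (hrn : r ≤ n) (g : Matrix (Fin n) (Fin n) F) (hg : IsUnit g) :
    ∃ S : Idx n r, minor hrn S g ≠ 0 := by
  classical
  set A : Matrix (Fin n) (Fin r) F := g.submatrix id (Fin.castLE hrn) with hA
  -- the rows of `A` span `Fin r → F`
  have hspan : Submodule.span F (Set.range fun i => A i) = ⊤ := by
    rw [eq_top_iff]
    intro y _
    obtain ⟨x, hx⟩ := (Matrix.vecMul_surjective_iff_isUnit.mpr hg) (ext hrn y)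
    have : x ᵥ* A = y := by
      funext j
      have : (x ᵥ* A) j = (x ᵥ* g) (Fin.castLE hrn j) := by
        simp [Matrix.vecMul, dotProduct, hA]
      have hx' : x ᵥ* g = ext hrn y := hx
      rw [this, hx', ext_castLE]
    rw [← this]
    have : x ᵥ* A = ∑ i, x i • A i := by
      funext j; simp [Matrix.vecMul, dotProduct, Finset.sum_apply]
    rw [this]
    exact Submodule.sum_mem _ fun i _ =>
      Submodule.smul_mem _ _ (Submodule.subset_span (Set.mem_range_self i))
  obtain ⟨b, hbsub, hbspan, hbind⟩ := exists_linearIndependent F (Set.range fun i => A i)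
  rw [hspan] at hbspan
  have hbfin : b.Finite := (Set.finite_range _).subset hbsub
  haveI : Fintype b := hbfin.fintype
  -- b is a basis of `Fin r → F`, hence has cardinality `r`
  let bas : Module.Basis b F (Fin r → F) := Module.Basis.mk hbind
    (by rw [Subtype.range_coe]; exact hbspan.ge)
  have hcard : Fintype.card b = r := by
    have := Module.finrank_eq_card_basis bas
    simpa [Module.finrank_pi] using this.symm
  -- choose a row index for each element of b
  have hchoice : ∀ v : b, ∃ i : Fin n, A i = (v : Fin r → F) := fun v => hbsub v.2
  choose t ht using hchoice
  have htinj : Function.Injective t := fun v w hvw => Subtype.ext (by rw [← ht v, ← ht w, hvw])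
  set S : Finset (Fin n) := Finset.univ.image t with hS
  have hScard : S.card = r := by
    rw [hS, Finset.card_image_of_injective _ htinj, Finset.card_univ, hcard]
  refine ⟨⟨S, hScard⟩, ?_⟩
  -- rows of the square submatrix are linearly independent
  have hrows : LinearIndependent F fun i : Fin r =>
      (g.submatrix (S.orderEmbOfFin hScard) (Fin.castLE hrn)) i := by
    have hmem : ∀ i : Fin r, (S.orderEmbOfFin hScard) i ∈ S := fun i =>
      Finset.orderEmbOfFin_mem _ _ _
    -- `A` is injective on `S`
    have hAinj : ∀ s ∈ S, ∀ s' ∈ S, A s = A s' → s = s' := by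
      intro s hs s' hs' hA'
      obtain ⟨v, -, hv⟩ := Finset.mem_image.mp (by rw [← hS]; exact hs)
      obtain ⟨v', -, hv'⟩ := Finset.mem_image.mp (by rw [← hS]; exact hs')
      have : (v : Fin r → F) = (v' : Fin r → F) := by
        rw [← ht v, ← ht v', hv, hv', hA']
      rw [← hv, ← hv', Subtype.ext this]
    -- each row is `A` of an element of `S`, which lies in `b`
    have hrow : ∀ i : Fin r, ∃ v : b, A ((S.orderEmbOfFin hScard) i) = (v : Fin r → F) := by
      intro i
      obtain ⟨v, -, hv⟩ := Finset.mem_image.mp (by rw [← hS]; exact hmem i)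
      exact ⟨v, by rw [← hv, ht]⟩
    choose σ hσ using hrow
    have hσinj : Function.Injective σ := by
      intro i j hij
      have hAij : A ((S.orderEmbOfFin hScard) i) = A ((S.orderEmbOfFin hScard) j) := by
        rw [hσ i, hσ j, hij]
      exact (S.orderEmbOfFin hScard).injective (hAinj _ (hmem i) _ (hmem j) hAij)
    have : (fun i : Fin r => (g.submatrix (S.orderEmbOfFin hScard) (Fin.castLE hrn)) i)
        = (fun v : b => (v : Fin r → F)) ∘ σ := by
      funext i; exact hσ i
    rw [this]
    exact hbind.comp σ hσinj
  have := Matrix.linearIndependent_rows_iff_isUnit.mp hrows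
  intro hdet
  rw [minor] at hdet
  exact ((Matrix.isUnit_iff_isUnit_det _).mp this).ne_zero hdet

end ParSec

open scoped Pointwise

namespace ParSec

section Cells

variable {F : Type*} [NontriviallyNormedField F] [IsUltrametricDist F] {n r : ℕ}

lemma norm_eq_of_sub_lt {a b : F} (h : ‖a - b‖ < ‖b‖) : ‖a‖ = ‖b‖ := by
  have h1 : ‖a‖ ≤ ‖b‖ := by
    have : ‖(a - b) + b‖ ≤ max ‖a - b‖ ‖b‖ := IsUltrametricDist.norm_add_le_max _ _
    rw [sub_add_cancel] at this
    exact this.trans (max_le h.le le_rfl)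
  refine le_antisymm h1 ?_
  have h2 : ‖b‖ ≤ max ‖a‖ ‖b - a‖ := by
    simpa using IsUltrametricDist.norm_add_le_max a (b - a)
  rcases le_max_iff.mp h2 with he | he
  · exact he
  · rw [norm_sub_rev] at he
    exact absurd (lt_of_le_of_lt he h) (lt_irrefl _)

noncomputable def ord : Idx n r → ℕ := fun S => ((Fintype.equivFin (Idx n r)) S : ℕ)

lemma ord_injective : Function.Injective (ord (n := n) (r := r)) := fun a b h =>
  (Fintype.equivFin (Idx n r)).injective (Fin.val_injective h)

/-- The clopen piece of `GL_n(F)` where the `S`-minor of the first `r` columns has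
maximal norm, with ties broken according to `ord`. -/
noncomputable def cell (hrn : r ≤ n) (S : Idx n r) : Set (GL (Fin n) F) :=
  {g | (∀ T : Idx n r, ‖minor hrn T (g : Matrix (Fin n) (Fin n) F)‖ ≤
          ‖minor hrn S (g : Matrix (Fin n) (Fin n) F)‖) ∧
       ∀ T : Idx n r, ord T < ord S →
          ‖minor hrn T (g : Matrix (Fin n) (Fin n) F)‖ <
          ‖minor hrn S (g : Matrix (Fin n) (Fin n) F)‖}

lemma cell_disjoint (hrn : r ≤ n) {S T : Idx n r} (hST : S ≠ T) :
    Disjoint (cell (F := F) hrn S) (cell hrn T) := by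
  rw [Set.disjoint_left]
  rintro g ⟨hS1, hS2⟩ ⟨hT1, hT2⟩
  rcases lt_or_gt_of_ne (fun h => hST (ord_injective h)) with h | h
  · exact (hT2 S h).not_ge (hS1 T)
  · exact (hS2 T h).not_ge (hT1 S)

lemma exists_mem_cell (hrn : r ≤ n) (g : GL (Fin n) F) : ∃ S : Idx n r, g ∈ cell hrn S := by
  classical
  have hne : (Finset.univ : Finset (Idx n r)).Nonempty := by
    obtain ⟨t, -, ht⟩ := Finset.exists_subset_card_eq
      (show r ≤ (Finset.univ : Finset (Fin n)).card by simpa using hrn)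
    exact ⟨⟨t, ht⟩, Finset.mem_univ _⟩
  set f : Idx n r → ℝ := fun T => ‖minor hrn T (g : Matrix (Fin n) (Fin n) F)‖ with hfdef
  obtain ⟨T₀, -, hT₀⟩ := Finset.exists_max_image Finset.univ f hne
  set M : Finset (Idx n r) := Finset.univ.filter (fun T => ∀ T', f T' ≤ f T) with hM
  have hMne : M.Nonempty := ⟨T₀, Finset.mem_filter.mpr ⟨Finset.mem_univ _,
    fun T' => hT₀ T' (Finset.mem_univ _)⟩⟩
  obtain ⟨S, hSM, hSmin⟩ := Finset.exists_min_image M ord hMne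
  have hSmax : ∀ T', f T' ≤ f S := (Finset.mem_filter.mp hSM).2
  refine ⟨S, hSmax, fun T hT => ?_⟩
  by_contra hc
  have heq : f T = f S := le_antisymm (hSmax T) (not_lt.mp hc)
  have hTM : T ∈ M := Finset.mem_filter.mpr ⟨Finset.mem_univ _,
    fun T' => (hSmax T').trans heq.ge⟩
  exact absurd (hSmin T hTM) (not_le.mpr hT)

lemma isUnit_coe (g : GL (Fin n) F) : IsUnit (g : Matrix (Fin n) (Fin n) F) := g.isUnit

lemma minor_ne_zero_of_mem_cell (hrn : r ≤ n) {S : Idx n r} {g : GL (Fin n) F}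
    (hg : g ∈ cell hrn S) : minor hrn S (g : Matrix (Fin n) (Fin n) F) ≠ 0 := by
  obtain ⟨T, hT⟩ := exists_minor_ne_zero hrn (g : Matrix (Fin n) (Fin n) F) (isUnit_coe g)
  have h1 : 0 < ‖minor hrn T (g : Matrix (Fin n) (Fin n) F)‖ := norm_pos_iff.mpr hT
  have h2 := hg.1 T
  intro hc
  rw [hc, norm_zero] at h2
  exact absurd (lt_of_lt_of_le h1 h2) (lt_irrefl _)

lemma continuous_minor (hrn : r ≤ n) (S : Idx n r) :
    Continuous fun g : GL (Fin n) F => minor hrn S (g : Matrix (Fin n) (Fin n) F) :=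
  (Continuous.matrix_submatrix Units.continuous_val _ _).matrix_det

lemma cell_open (hrn : r ≤ n) (S : Idx n r) : IsOpen (cell (F := F) hrn S) := by
  rw [isOpen_iff_forall_mem_open]
  intro g hg
  set c := ‖minor hrn S (g : Matrix (Fin n) (Fin n) F)‖ with hc
  have hcpos : 0 < c := norm_pos_iff.mpr (minor_ne_zero_of_mem_cell hrn hg)
  refine ⟨⋂ T : Idx n r, {g' : GL (Fin n) F |
    ‖minor hrn T (g' : Matrix (Fin n) (Fin n) F) -
      minor hrn T (g : Matrix (Fin n) (Fin n) F)‖ < c}, ?_, ?_, ?_⟩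
  · intro g' hg'
    simp only [Set.mem_iInter, Set.mem_setOf_eq] at hg'
    have hSeq : ‖minor hrn S (g' : Matrix (Fin n) (Fin n) F)‖ = c :=
      norm_eq_of_sub_lt (hg' S)
    constructor
    · intro T
      rw [hSeq]
      have : minor hrn T (g' : Matrix (Fin n) (Fin n) F) =
          (minor hrn T (g' : Matrix (Fin n) (Fin n) F) -
            minor hrn T (g : Matrix (Fin n) (Fin n) F)) +
          minor hrn T (g : Matrix (Fin n) (Fin n) F) := by ring
      rw [this]
      exact (IsUltrametricDist.norm_add_le_max _ _).trans (max_le (hg' T).le (hg.1 T))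
    · intro T hT
      rw [hSeq]
      have h1 : ‖minor hrn T (g : Matrix (Fin n) (Fin n) F)‖ < c := hg.2 T hT
      have : minor hrn T (g' : Matrix (Fin n) (Fin n) F) =
          (minor hrn T (g' : Matrix (Fin n) (Fin n) F) -
            minor hrn T (g : Matrix (Fin n) (Fin n) F)) +
          minor hrn T (g : Matrix (Fin n) (Fin n) F) := by ring
      rw [this]
      exact lt_of_le_of_lt (IsUltrametricDist.norm_add_le_max _ _)
        (max_lt (hg' T) h1)
  · exact isOpen_iInter_of_finite fun T => isOpen_lt
      (((continuous_minor hrn T).sub continuous_const).norm) continuous_const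
  · simp only [Set.mem_iInter, Set.mem_setOf_eq]
    intro T
    simpa using hcpos

lemma cell_closed (hrn : r ≤ n) (S : Idx n r) : IsClosed (cell (F := F) hrn S) := by
  rw [← isOpen_compl_iff]
  have : (cell (F := F) hrn S)ᶜ = ⋃ T : Idx n r, ⋃ (_ : T ≠ S), cell hrn T := by
    ext g
    simp only [Set.mem_compl_iff, Set.mem_iUnion]
    constructor
    · intro hg
      obtain ⟨T, hT⟩ := exists_mem_cell hrn g
      exact ⟨T, fun h => hg (h ▸ hT), hT⟩
    · rintro ⟨T, hTS, hT⟩ hgS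
      exact Set.disjoint_left.mp (cell_disjoint hrn hTS) hT hgS
  rw [this]
  exact isOpen_iUnion fun T => isOpen_iUnion fun _ => cell_open hrn T

lemma cell_mul_mem (hrn : r ≤ n) {S : Idx n r} {g p : GL (Fin n) F}
    (hp : p ∈ Parabolic F n r) (hg : g ∈ cell hrn S) : g * p ∈ cell hrn S := by
  have hpmat : IsParMat r (p : Matrix (Fin n) (Fin n) F) := hp
  set d : F := ((p : Matrix (Fin n) (Fin n) F).submatrix (Fin.castLE hrn) (Fin.castLE hrn)).det
    with hd
  have hmul : ∀ T : Idx n r, minor hrn T ((g * p : GL (Fin n) F) : Matrix (Fin n) (Fin n) F) =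
      minor hrn T (g : Matrix (Fin n) (Fin n) F) * d := by
    intro T
    rw [Units.val_mul]
    exact minor_mul_par hrn T _ _ hpmat
  have hdne : d ≠ 0 := by
    obtain ⟨T, hT⟩ := exists_minor_ne_zero hrn
      ((g * p : GL (Fin n) F) : Matrix (Fin n) (Fin n) F) (isUnit_coe _)
    rw [hmul T] at hT
    exact fun hc => hT (by rw [hc, mul_zero])
  have hdpos : 0 < ‖d‖ := norm_pos_iff.mpr hdne
  constructor
  · intro T
    rw [hmul T, hmul S, norm_mul, norm_mul]
    exact mul_le_mul_of_nonneg_right (hg.1 T) (norm_nonneg d)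
  · intro T hT
    rw [hmul T, hmul S, norm_mul, norm_mul]
    exact mul_lt_mul_of_pos_right (hg.2 T hT) hdpos

end Cells

section Sec

variable {F : Type*} [NontriviallyNormedField F] [IsUltrametricDist F] {n r : ℕ}

/-- Embedding of `Fin (n - r)` as the complement of `S`. -/
noncomputable def cemb (S : Idx n r) : Fin (n - r) → Fin n :=
  (S.1ᶜ).orderEmbOfFin (by rw [Finset.card_compl, S.2, Fintype.card_fin])

lemma cemb_mem_compl (S : Idx n r) (j : Fin (n - r)) : cemb S j ∈ S.1ᶜ :=
  Finset.orderEmbOfFin_mem _ _ _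

lemma cemb_injective (S : Idx n r) : Function.Injective (cemb S) :=
  fun a b h => by
    have := (Finset.orderEmbOfFin (S.1ᶜ)
      (by rw [Finset.card_compl, S.2, Fintype.card_fin])).injective h
    exact this

/-- Index of the `(r + j)`-th column. -/
def highIdx (hrn : r ≤ n) (j : Fin (n - r)) : Fin n :=
  ⟨r + j, by have := j.isLt; omega⟩

lemma eq_highIdx (hrn : r ≤ n) (j : Fin n) (hj : ¬ (j : ℕ) < r) :
    j = highIdx hrn ⟨(j : ℕ) - r, by have := j.isLt; omega⟩ := by
  apply Fin.ext
  simp [highIdx]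
  omega

/-- Normalized first `r` columns: `A·M⁻¹` where `M` is the `S`-rows square block. -/
noncomputable def secB (hrn : r ≤ n) (S : Idx n r) (g : Matrix (Fin n) (Fin n) F) :
    Matrix (Fin n) (Fin r) F :=
  (g.submatrix id (Fin.castLE hrn)) * (g.submatrix (S.1.orderEmbOfFin S.2) (Fin.castLE hrn))⁻¹

/-- The canonical representative matrix: first `r` columns normalized, remaining columns
the standard basis vectors indexed by the complement of `S`. -/
noncomputable def secM (hrn : r ≤ n) (S : Idx n r) (g : Matrix (Fin n) (Fin n) F) :
    Matrix (Fin n) (Fin n) F :=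
  Matrix.of fun i j =>
    if h : (j : ℕ) < r then secB hrn S g i ⟨j, h⟩
    else if i = cemb S ⟨(j : ℕ) - r, by have := j.isLt; omega⟩ then 1 else 0

lemma secM_low (hrn : r ≤ n) (S : Idx n r) (g : Matrix (Fin n) (Fin n) F) (i : Fin n)
    (j : Fin r) : secM hrn S g i (Fin.castLE hrn j) = secB hrn S g i j := by
  have h : ((Fin.castLE hrn j : Fin n) : ℕ) < r := j.isLt
  simp only [secM, Matrix.of_apply, dif_pos h]
  exact congrArg (secB hrn S g i) (Fin.ext rfl)

lemma secM_high (hrn : r ≤ n) (S : Idx n r) (g : Matrix (Fin n) (Fin n) F) (i : Fin n)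
    (j : Fin (n - r)) :
    secM hrn S g i (highIdx hrn j) = if i = cemb S j then 1 else 0 := by
  have h : ¬ ((highIdx hrn j : Fin n) : ℕ) < r := by simp [highIdx]
  simp only [secM, Matrix.of_apply, dif_neg h]
  congr 2
  apply Fin.ext
  simp [highIdx]

lemma secB_S (hrn : r ≤ n) (S : Idx n r) (g : Matrix (Fin n) (Fin n) F)
    (hd : minor hrn S g ≠ 0) :
    (secB hrn S g).submatrix (S.1.orderEmbOfFin S.2) id = 1 := by
  have hmul : (secB hrn S g).submatrix (S.1.orderEmbOfFin S.2) id =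
      (g.submatrix (S.1.orderEmbOfFin S.2) (Fin.castLE hrn)) *
        (g.submatrix (S.1.orderEmbOfFin S.2) (Fin.castLE hrn))⁻¹ := by
    ext i j
    simp only [secB, Matrix.submatrix_apply, Matrix.mul_apply, Matrix.submatrix_apply, id_eq]
  rw [hmul, Matrix.mul_nonsing_inv _ (isUnit_iff_ne_zero.mpr hd)]

lemma secM_S (hrn : r ≤ n) (S : Idx n r) (g : Matrix (Fin n) (Fin n) F)
    (hd : minor hrn S g ≠ 0) (i : Fin r) (j : Fin r) :
    secM hrn S g (S.1.orderEmbOfFin S.2 i) (Fin.castLE hrn j) = (1 : Matrix (Fin r) (Fin r) F) i j := by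
  rw [secM_low]
  have := congrFun (congrFun (secB_S hrn S g hd) i) j
  simpa using this

lemma isUnit_secM (hrn : r ≤ n) (S : Idx n r) (g : Matrix (Fin n) (Fin n) F)
    (hd : minor hrn S g ≠ 0) : IsUnit (secM hrn S g) := by
  rw [← Matrix.mulVec_injective_iff_isUnit]
  have hker : ∀ z : Fin n → F, secM hrn S g *ᵥ z = 0 → z = 0 := by
    intro z hz
    have hrow : ∀ i : Fin n, ∑ j : Fin n, secM hrn S g i j * z j = 0 := by
      intro i
      have := congrFun hz i
      simpa [Matrix.mulVec, dotProduct] using this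
    have hsplit : ∀ i : Fin n,
        (∑ j : Fin r, secM hrn S g i (Fin.castLE hrn j) * z (Fin.castLE hrn j)) +
        (∑ j : Fin (n - r), secM hrn S g i (highIdx hrn j) * z (highIdx hrn j)) = 0 := by
      intro i
      exact (sum_fin_split hrn (fun j => secM hrn S g i j * z j)).symm.trans (hrow i)
    -- low coordinates vanish
    have hlow : ∀ i : Fin r, z (Fin.castLE hrn i) = 0 := by
      intro i₀
      have h := hsplit (S.1.orderEmbOfFin S.2 i₀)
      have h1 : (∑ j : Fin r, secM hrn S g (S.1.orderEmbOfFin S.2 i₀) (Fin.castLE hrn j) *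
          z (Fin.castLE hrn j)) = z (Fin.castLE hrn i₀) := by
        rw [Finset.sum_congr rfl (fun j _ => by rw [secM_S hrn S g hd i₀ j])]
        simp [Matrix.one_apply]
      have h2 : (∑ j : Fin (n - r), secM hrn S g (S.1.orderEmbOfFin S.2 i₀) (highIdx hrn j) *
          z (highIdx hrn j)) = 0 := by
        refine Finset.sum_eq_zero fun j _ => ?_
        rw [secM_high]
        have : ¬ (S.1.orderEmbOfFin S.2 i₀ = cemb S j) := by
          intro hc
          have h3 := cemb_mem_compl S j
          rw [← hc] at h3
          exact (Finset.mem_compl.mp h3) (Finset.orderEmbOfFin_mem _ _ _)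
        rw [if_neg this, zero_mul]
      rw [h1, h2, add_zero] at h
      exact h
    -- high coordinates vanish
    have hhigh : ∀ t : Fin (n - r), z (highIdx hrn t) = 0 := by
      intro t
      have h := hsplit (cemb S t)
      have h1 : (∑ j : Fin r, secM hrn S g (cemb S t) (Fin.castLE hrn j) *
          z (Fin.castLE hrn j)) = 0 :=
        Finset.sum_eq_zero fun j _ => by rw [hlow j, mul_zero]
      have h2 : (∑ j : Fin (n - r), secM hrn S g (cemb S t) (highIdx hrn j) *
          z (highIdx hrn j)) = z (highIdx hrn t) := by
        have hcond : ∀ j, (cemb S t = cemb S j) ↔ t = j :=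
          fun j => ⟨fun h => cemb_injective S h, fun h => by rw [h]⟩
        rw [Finset.sum_congr rfl (fun j _ => by rw [secM_high])]
        simp only [ite_mul, one_mul, zero_mul, hcond]
        simp
      rw [h1, h2, zero_add] at h
      exact h
    funext i
    by_cases hi : (i : ℕ) < r
    · have : i = Fin.castLE hrn ⟨(i : ℕ), hi⟩ := Fin.ext rfl
      rw [this]
      exact hlow _
    · rw [eq_highIdx hrn i hi]
      exact hhigh _
  intro x y hxy
  have : secM hrn S g *ᵥ (x - y) = 0 := by
    rw [Matrix.mulVec_sub, hxy, sub_self]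
  have hz0 := hker _ this
  funext i
  exact sub_eq_zero.mp (congrFun hz0 i)

end Sec


section Sec2

variable {F : Type*} [NontriviallyNormedField F] [IsUltrametricDist F] {n r : ℕ}

/-- The canonical representative of the coset of `g`, as a unit. -/
noncomputable def secUnit (hrn : r ≤ n) (S : Idx n r) (g : cell (F := F) hrn S) :
    GL (Fin n) F where
  val := secM hrn S ((g : GL (Fin n) F) : Matrix (Fin n) (Fin n) F)
  inv := (secM hrn S ((g : GL (Fin n) F) : Matrix (Fin n) (Fin n) F))⁻¹
  val_inv := Matrix.mul_nonsing_inv _ ((Matrix.isUnit_iff_isUnit_det _).mp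
    (isUnit_secM hrn S _ (minor_ne_zero_of_mem_cell hrn g.2)))
  inv_val := Matrix.nonsing_inv_mul _ ((Matrix.isUnit_iff_isUnit_det _).mp
    (isUnit_secM hrn S _ (minor_ne_zero_of_mem_cell hrn g.2)))

lemma secUnit_val (hrn : r ≤ n) (S : Idx n r) (g : cell (F := F) hrn S) :
    ((secUnit hrn S g : GL (Fin n) F) : Matrix (Fin n) (Fin n) F) =
      secM hrn S ((g : GL (Fin n) F) : Matrix (Fin n) (Fin n) F) := rfl

lemma secUnit_inv_val (hrn : r ≤ n) (S : Idx n r) (g : cell (F := F) hrn S) :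
    (((secUnit hrn S g)⁻¹ : GL (Fin n) F) : Matrix (Fin n) (Fin n) F) =
      (secM hrn S ((g : GL (Fin n) F) : Matrix (Fin n) (Fin n) F))⁻¹ := rfl

lemma secM_submatrix (hrn : r ≤ n) (S : Idx n r) (g : Matrix (Fin n) (Fin n) F) :
    (secM hrn S g).submatrix id (Fin.castLE hrn) = secB hrn S g := by
  ext i j
  exact secM_low hrn S g i j

lemma secUnit_inv_mul_mem (hrn : r ≤ n) (S : Idx n r) (g : cell (F := F) hrn S) :
    (secUnit hrn S g)⁻¹ * (g : GL (Fin n) F) ∈ Parabolic F n r := by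
  set gm := ((g : GL (Fin n) F) : Matrix (Fin n) (Fin n) F) with hgm
  have hd : minor hrn S gm ≠ 0 := minor_ne_zero_of_mem_cell hrn g.2
  have hdet : IsUnit (secM hrn S gm).det :=
    (Matrix.isUnit_iff_isUnit_det _).mp (isUnit_secM hrn S _ hd)
  show IsParMat r _
  rw [Units.val_mul, secUnit_inv_val]
  rw [isParMat_iff_mapsTo]
  intro v hv
  have hv' : ∀ i : Fin n, r ≤ (i : ℕ) → v i = 0 := hv
  set x : Fin r → F := fun j => v (Fin.castLE hrn j) with hx
  have hvx : v = ext hrn x := by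
    funext i
    by_cases hi : (i : ℕ) < r
    · rw [show ext hrn x i = x ⟨i, hi⟩ from dif_pos hi]
      exact (congrArg v (Fin.ext rfl)).symm
    · rw [ext_high hrn x i (not_lt.mp hi)]
      exact hv' i (not_lt.mp hi)
  set M := gm.submatrix (S.1.orderEmbOfFin S.2) (Fin.castLE hrn) with hM
  have h1 : gm *ᵥ v = secM hrn S gm *ᵥ ext hrn (M *ᵥ x) := by
    rw [hvx, mulVec_ext hrn gm x, mulVec_ext hrn (secM hrn S gm) _, secM_submatrix,
      Matrix.mulVec_mulVec]
    have : secB hrn S gm * M = gm.submatrix id (Fin.castLE hrn) := by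
      rw [secB, Matrix.mul_assoc, Matrix.nonsing_inv_mul _ (isUnit_iff_ne_zero.mpr hd),
        Matrix.mul_one]
    rw [this]
  have h2 : ((secM hrn S gm)⁻¹ * gm) *ᵥ v = ext hrn (M *ᵥ x) := by
    rw [← Matrix.mulVec_mulVec, h1, Matrix.mulVec_mulVec,
      Matrix.nonsing_inv_mul _ hdet, Matrix.one_mulVec]
  rw [h2]
  exact fun i hi => ext_high hrn _ i hi

/-- The closed set of canonical representatives over the cell of `S`. -/
noncomputable def UU (hrn : r ≤ n) (S : Idx n r) : Set (GL (Fin n) F) :=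
  cell hrn S ∩ {g : GL (Fin n) F |
    (g : Matrix (Fin n) (Fin n) F).submatrix (S.1.orderEmbOfFin S.2) (Fin.castLE hrn) = 1 ∧
    ∀ (i : Fin n) (j : Fin (n - r)),
      (g : Matrix (Fin n) (Fin n) F) i (highIdx hrn j) = if i = cemb S j then 1 else 0}

lemma UU_closed (hrn : r ≤ n) (S : Idx n r) : IsClosed (UU (F := F) hrn S) := by
  have hset : UU (F := F) hrn S = cell hrn S ∩
      ({g : GL (Fin n) F |
        (g : Matrix (Fin n) (Fin n) F).submatrix (S.1.orderEmbOfFin S.2) (Fin.castLE hrn)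
          = 1} ∩
      ⋂ (i : Fin n) (j : Fin (n - r)), {g : GL (Fin n) F |
        (g : Matrix (Fin n) (Fin n) F) i (highIdx hrn j) = if i = cemb S j then 1 else 0}) := by
    unfold UU
    ext g
    simp only [Set.mem_inter_iff, Set.mem_setOf_eq, Set.mem_iInter]
  rw [hset]
  exact (cell_closed hrn S).inter
    ((isClosed_eq (Units.continuous_val.matrix_submatrix _ _) continuous_const).inter
      (isClosed_iInter fun i => isClosed_iInter fun j =>
        isClosed_eq (Units.continuous_val.matrix_elem _ _) continuous_const))

lemma secUnit_mem_UU (hrn : r ≤ n) (S : Idx n r) (g : cell (F := F) hrn S) :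
    secUnit hrn S g ∈ UU hrn S := by
  have hd : minor hrn S ((g : GL (Fin n) F) : Matrix (Fin n) (Fin n) F) ≠ 0 :=
    minor_ne_zero_of_mem_cell hrn g.2
  refine ⟨?_, ?_, ?_⟩
  · -- cell membership
    have hp := secUnit_inv_mul_mem hrn S g
    have hkey : secUnit hrn S g =
        (g : GL (Fin n) F) * ((secUnit hrn S g)⁻¹ * (g : GL (Fin n) F))⁻¹ := by
      group
    rw [hkey]
    exact cell_mul_mem hrn (inv_mem hp) g.2
  · ext i j
    rw [Matrix.submatrix_apply]
    exact secM_S hrn S _ hd i j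
  · intro i j
    exact secM_high hrn S _ i j

lemma uu_unique (hrn : r ≤ n) (S : Idx n r) {u u' p p' : GL (Fin n) F}
    (hu : u ∈ UU hrn S) (hu' : u' ∈ UU hrn S)
    (hp : p ∈ Parabolic F n r) (hp' : p' ∈ Parabolic F n r)
    (heq : u * p = u' * p') : u = u' ∧ p = p' := by
  have hq : p * p'⁻¹ ∈ Parabolic F n r := mul_mem hp (inv_mem hp')
  have hqmat : IsParMat r ((p * p'⁻¹ : GL (Fin n) F) : Matrix (Fin n) (Fin n) F) := hq
  have hu'eq : u' = u * (p * p'⁻¹) := by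
    rw [← mul_assoc, heq, mul_assoc, mul_inv_cancel, mul_one]
  have h0 : ((u' : GL (Fin n) F) : Matrix (Fin n) (Fin n) F).submatrix
      (S.1.orderEmbOfFin S.2) (Fin.castLE hrn) =
      ((u : GL (Fin n) F) : Matrix (Fin n) (Fin n) F).submatrix
        (S.1.orderEmbOfFin S.2) (Fin.castLE hrn) *
      ((p * p'⁻¹ : GL (Fin n) F) : Matrix (Fin n) (Fin n) F).submatrix
        (Fin.castLE hrn) (Fin.castLE hrn) := by
    rw [hu'eq, Units.val_mul]
    exact submatrix_mul_par hrn _ _ hqmat _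
  have hqblock : ((p * p'⁻¹ : GL (Fin n) F) : Matrix (Fin n) (Fin n) F).submatrix
      (Fin.castLE hrn) (Fin.castLE hrn) = 1 := by
    rw [hu'.2.1, hu.2.1, Matrix.one_mul] at h0
    exact h0.symm
  have hlowcols : ((u' : GL (Fin n) F) : Matrix (Fin n) (Fin n) F).submatrix id
      (Fin.castLE hrn) = ((u : GL (Fin n) F) : Matrix (Fin n) (Fin n) F).submatrix id
      (Fin.castLE hrn) := by
    rw [hu'eq, Units.val_mul, submatrix_mul_par hrn _ _ hqmat id, hqblock, Matrix.mul_one]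
  have humat : ((u' : GL (Fin n) F) : Matrix (Fin n) (Fin n) F) =
      ((u : GL (Fin n) F) : Matrix (Fin n) (Fin n) F) := by
    ext i j
    by_cases hj : (j : ℕ) < r
    · have hj' : j = Fin.castLE hrn ⟨(j : ℕ), hj⟩ := Fin.ext rfl
      rw [hj']
      exact congrFun (congrFun hlowcols i) ⟨(j : ℕ), hj⟩
    · rw [eq_highIdx hrn j hj, hu'.2.2 i _, hu.2.2 i _]
  have huu : u = u' := Units.ext humat.symm
  exact ⟨huu, by rw [huu] at heq; exact mul_left_cancel heq⟩

lemma UU_mul_par (hrn : r ≤ n) (S : Idx n r) :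
    UU hrn S * ((Parabolic F n r : Subgroup (GL (Fin n) F)) : Set (GL (Fin n) F)) =
      cell hrn S := by
  ext g
  rw [Set.mem_mul]
  constructor
  · rintro ⟨u, hu, p, hp, rfl⟩
    exact cell_mul_mem hrn hp hu.1
  · intro hg
    refine ⟨secUnit hrn S ⟨g, hg⟩, secUnit_mem_UU hrn S ⟨g, hg⟩,
      (secUnit hrn S ⟨g, hg⟩)⁻¹ * g, secUnit_inv_mul_mem hrn S ⟨g, hg⟩, ?_⟩
    rw [mul_inv_cancel_left]

lemma continuous_secUnit (hrn : r ≤ n) (S : Idx n r) :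
    Continuous (secUnit hrn S : cell (F := F) hrn S → GL (Fin n) F) := by
  have hval : Continuous fun g : cell (F := F) hrn S =>
      ((g : GL (Fin n) F) : Matrix (Fin n) (Fin n) F) :=
    Units.continuous_val.comp continuous_subtype_val
  have hM : Continuous fun g : cell (F := F) hrn S =>
      (((g : GL (Fin n) F) : Matrix (Fin n) (Fin n) F)).submatrix
        (S.1.orderEmbOfFin S.2) (Fin.castLE hrn) := hval.matrix_submatrix _ _
  have hdet : Continuous fun g : cell (F := F) hrn S =>
      minor hrn S ((g : GL (Fin n) F) : Matrix (Fin n) (Fin n) F) := hM.matrix_det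
  have hdetne : ∀ g : cell (F := F) hrn S,
      minor hrn S ((g : GL (Fin n) F) : Matrix (Fin n) (Fin n) F) ≠ 0 :=
    fun g => minor_ne_zero_of_mem_cell hrn g.2
  have hMinv : Continuous fun g : cell (F := F) hrn S =>
      ((((g : GL (Fin n) F) : Matrix (Fin n) (Fin n) F)).submatrix
        (S.1.orderEmbOfFin S.2) (Fin.castLE hrn))⁻¹ := by
    have heq : (fun g : cell (F := F) hrn S =>
        ((((g : GL (Fin n) F) : Matrix (Fin n) (Fin n) F)).submatrix
          (S.1.orderEmbOfFin S.2) (Fin.castLE hrn))⁻¹) =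
        fun g : cell (F := F) hrn S =>
          (minor hrn S ((g : GL (Fin n) F) : Matrix (Fin n) (Fin n) F))⁻¹ •
          ((((g : GL (Fin n) F) : Matrix (Fin n) (Fin n) F)).submatrix
            (S.1.orderEmbOfFin S.2) (Fin.castLE hrn)).adjugate := by
      funext g
      rw [Matrix.inv_def, Ring.inverse_eq_inv]
      rfl
    rw [heq]
    exact (hdet.inv₀ hdetne).smul hM.matrix_adjugate
  have hsecB : Continuous fun g : cell (F := F) hrn S =>
      secB hrn S ((g : GL (Fin n) F) : Matrix (Fin n) (Fin n) F) :=
    (hval.matrix_submatrix _ _).matrix_mul hMinv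
  have hsecM : Continuous fun g : cell (F := F) hrn S =>
      secM hrn S ((g : GL (Fin n) F) : Matrix (Fin n) (Fin n) F) := by
    apply continuous_matrix
    intro i j
    by_cases hj : (j : ℕ) < r
    · simp only [secM, Matrix.of_apply, dif_pos hj]
      exact hsecB.matrix_elem _ _
    · simp only [secM, Matrix.of_apply, dif_neg hj]
      exact continuous_const
  have hsdetne : ∀ g : cell (F := F) hrn S,
      (secM hrn S ((g : GL (Fin n) F) : Matrix (Fin n) (Fin n) F)).det ≠ 0 := fun g =>
    ((Matrix.isUnit_iff_isUnit_det _).mp (isUnit_secM hrn S _ (hdetne g))).ne_zero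
  rw [Units.continuous_iff]
  constructor
  · exact hsecM
  · have heq : (fun g : cell (F := F) hrn S =>
        (((secUnit hrn S g)⁻¹ : GL (Fin n) F) : Matrix (Fin n) (Fin n) F)) =
        fun g : cell (F := F) hrn S =>
          ((secM hrn S ((g : GL (Fin n) F) : Matrix (Fin n) (Fin n) F)).det)⁻¹ •
          (secM hrn S ((g : GL (Fin n) F) : Matrix (Fin n) (Fin n) F)).adjugate := by
      funext g
      rw [secUnit_inv_val, Matrix.inv_def, Ring.inverse_eq_inv]
    exact heq ▸ ((hsecM.matrix_det.inv₀ hsdetne).smul hsecM.matrix_adjugate)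

end Sec2


section Final

variable {F : Type*} [NontriviallyNormedField F] [IsUltrametricDist F] {n r : ℕ}

/-- The multiplication homeomorphism `U_S × P ≃ₜ cell S`. -/
noncomputable def cellHomeo (hrn : r ≤ n) (S : Idx n r) :
    (UU (F := F) hrn S × (Parabolic F n r)) ≃ₜ cell (F := F) hrn S where
  toFun q := ⟨(q.1 : GL (Fin n) F) * (q.2 : GL (Fin n) F),
    cell_mul_mem hrn q.2.2 q.1.2.1⟩
  invFun g := (⟨secUnit hrn S g, secUnit_mem_UU hrn S g⟩,
    ⟨(secUnit hrn S g)⁻¹ * (g : GL (Fin n) F), secUnit_inv_mul_mem hrn S g⟩)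
  left_inv q := by
    obtain ⟨⟨u, hu⟩, ⟨p, hp⟩⟩ := q
    set g : cell (F := F) hrn S := ⟨u * p, cell_mul_mem hrn hp hu.1⟩ with hg
    have hprod : secUnit hrn S g * ((secUnit hrn S g)⁻¹ * (u * p)) = u * p := by group
    have huniq := uu_unique hrn S (secUnit_mem_UU hrn S g) hu
      (secUnit_inv_mul_mem hrn S g) hp hprod
    exact Prod.ext (Subtype.ext huniq.1) (Subtype.ext huniq.2)
  right_inv g := Subtype.ext (mul_inv_cancel_left _ _)
  continuous_toFun := Continuous.subtype_mk
    (((continuous_subtype_val.comp continuous_fst).mul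
      (continuous_subtype_val.comp continuous_snd))) _
  continuous_invFun := Continuous.prodMk
    (((continuous_secUnit hrn S)).subtype_mk _)
    ((((continuous_secUnit hrn S).inv).mul continuous_subtype_val).subtype_mk _)

lemma isEmbedding_mul (hrn : r ≤ n) (S : Idx n r) :
    Topology.IsEmbedding (fun q : UU (F := F) hrn S × (Parabolic F n r) =>
      (q.1 : GL (Fin n) F) * (q.2 : GL (Fin n) F)) := by
  have hcomp : (fun q : UU (F := F) hrn S × (Parabolic F n r) =>
      (q.1 : GL (Fin n) F) * (q.2 : GL (Fin n) F)) =
      (Subtype.val) ∘ (cellHomeo hrn S) := rfl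
  rw [hcomp]
  exact Topology.IsEmbedding.subtypeVal.comp (cellHomeo hrn S).isEmbedding

end Final

end ParSec
open scoped Pointwise

/-- There are finitely many closed subsets `U₁, …, U_m` of `GL_n(F)` such
that each multiplication map `U_i × P → GL_n(F)` is injective and a homeomorphism onto its
image (an embedding), the images `U_i · P` are open and pairwise disjoint, and they cover
`GL_n(F)`. -/
theorem exists_closed_local_sections_for_parabolic
    {F : Type*} [NontriviallyNormedField F] [IsUltrametricDist F]
    [CompleteSpace F] [LocallyCompactSpace F]
    {n r : ℕ} (hn : 2 ≤ n) (hr : 0 < r) (hrn : r < n) :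
    ∃ (m : ℕ) (U : Fin m → Set (GL (Fin n) F)),
      (∀ i, IsClosed (U i)) ∧
      (∀ i, Topology.IsEmbedding
        (fun q : U i × (Parabolic F n r) => (q.1 : GL (Fin n) F) * (q.2 : GL (Fin n) F))) ∧
      (∀ i, IsOpen (U i * (Parabolic F n r : Set (GL (Fin n) F)))) ∧
      (Pairwise fun i j => Disjoint
        (U i * (Parabolic F n r : Set (GL (Fin n) F)))
        (U j * (Parabolic F n r : Set (GL (Fin n) F)))) ∧
      (⋃ i, U i * (Parabolic F n r : Set (GL (Fin n) F))) = Set.univ := by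
  
  classical
  have hrn' : r ≤ n := hrn.le
  refine ⟨Fintype.card (ParSec.Idx n r),
    fun i => ParSec.UU hrn' ((Fintype.equivFin (ParSec.Idx n r)).symm i), ?_, ?_, ?_, ?_, ?_⟩
  · exact fun i => ParSec.UU_closed hrn' _
  · exact fun i => ParSec.isEmbedding_mul hrn' _
  · intro i
    rw [ParSec.UU_mul_par hrn' _]
    exact ParSec.cell_open hrn' _
  · intro i j hij
    rw [ParSec.UU_mul_par, ParSec.UU_mul_par]
    exact ParSec.cell_disjoint hrn'
      (fun h => hij ((Fintype.equivFin (ParSec.Idx n r)).symm.injective h))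
  · ext g
    simp only [Set.mem_iUnion, Set.mem_univ, iff_true]
    obtain ⟨S, hS⟩ := ParSec.exists_mem_cell hrn' g
    refine ⟨Fintype.equivFin (ParSec.Idx n r) S, ?_⟩
    rw [ParSec.UU_mul_par]
    simpa using hS
end

section
/- The map sending a pair (λ₁, λ₂) of continuous group homomorphisms F^× → N to the map P → N, p ↦ λ₁(det A_p) + λ₂(det D_p), is a bijection from the set of pairs of continuous homomorphisms F^× → N onto the set of continuous group homomorphisms P → N. In particular, every continuous group homomorphism λ : P → N is of the form p ↦ λ₁(det A_p) + λ₂(det D_p) for unique continuous homomorphisms λ₁, λ₂ : F^× → N. -/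
open Matrix

/-- Identification of `Fin n` with `Fin r ⊕ Fin (n-r)`. -/
def blockEquiv (n r : ℕ) (h : r ≤ n) : Fin r ⊕ Fin (n - r) ≃ Fin n :=
  finSumFinEquiv.trans (finCongr (Nat.add_sub_cancel' h))

/-- The upper-left `r × r` block `A_g` of a matrix `g ∈ GL_n(F)`. -/
def Ablock {F : Type*} [Field F] {n : ℕ} (r : ℕ) (h : r ≤ n) (g : GL (Fin n) F) :
    Matrix (Fin r) (Fin r) F :=
  Matrix.toBlocks₁₁
    ((g : Matrix (Fin n) (Fin n) F).submatrix (blockEquiv n r h) (blockEquiv n r h))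

/-- The lower-right `(n-r) × (n-r)` block `D_g` of a matrix `g ∈ GL_n(F)`. -/
def Dblock {F : Type*} [Field F] {n : ℕ} (r : ℕ) (h : r ≤ n) (g : GL (Fin n) F) :
    Matrix (Fin (n - r)) (Fin (n - r)) F :=
  Matrix.toBlocks₂₂
    ((g : Matrix (Fin n) (Fin n) F).submatrix (blockEquiv n r h) (blockEquiv n r h))

lemma isUnit_det_blocks {F : Type*} [Field F] {n r : ℕ} (h : r ≤ n) {g : GL (Fin n) F}
    (hg : g ∈ Parabolic F n r) :
    IsUnit (Ablock r h g).det ∧ IsUnit (Dblock r h g).det := by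
  set M := (g : Matrix (Fin n) (Fin n) F).submatrix (blockEquiv n r h) (blockEquiv n r h)
    with hM
  have h21 : M.toBlocks₂₁ = 0 := by
    ext i j
    show (g : Matrix (Fin n) (Fin n) F)
      (blockEquiv n r h (Sum.inr i)) (blockEquiv n r h (Sum.inl j)) = 0
    apply hg
    · show r ≤ ((blockEquiv n r h) (Sum.inr i) : ℕ)
      simp [blockEquiv]
    · show ((blockEquiv n r h) (Sum.inl j) : ℕ) < r
      simp [blockEquiv]
  have hdet : (g : Matrix (Fin n) (Fin n) F).det = (Ablock r h g).det * (Dblock r h g).det := by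
    have h1 : M.det = (g : Matrix (Fin n) (Fin n) F).det :=
      Matrix.det_submatrix_equiv_self _ _
    have h2 : M = Matrix.fromBlocks M.toBlocks₁₁ M.toBlocks₁₂ 0 M.toBlocks₂₂ := by
      rw [← h21]
      exact (Matrix.fromBlocks_toBlocks M).symm
    rw [← h1]
    conv_lhs => rw [h2]
    rw [Matrix.det_fromBlocks_zero₂₁]
    rfl
  have hu : IsUnit ((g : Matrix (Fin n) (Fin n) F).det) :=
    (Matrix.isUnit_iff_isUnit_det _).mp ⟨g, rfl⟩
  rw [hdet] at hu
  constructor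
  · exact isUnit_of_mul_isUnit_left hu
  · rw [mul_comm] at hu
    exact isUnit_of_mul_isUnit_left hu

/-- The determinant of the upper-left block of an element of `P`, as a unit of `F`. -/
noncomputable def AblockDetUnit {F : Type*} [Field F] {n r : ℕ} (h : r ≤ n)
    (g : GL (Fin n) F) (hg : g ∈ Parabolic F n r) : Fˣ :=
  ((isUnit_det_blocks h hg).1).unit

/-- The determinant of the lower-right block of an element of `P`, as a unit of `F`. -/
noncomputable def DblockDetUnit {F : Type*} [Field F] {n r : ℕ} (h : r ≤ n)
    (g : GL (Fin n) F) (hg : g ∈ Parabolic F n r) : Fˣ :=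
  ((isUnit_det_blocks h hg).2).unit

namespace ParAux

section GLGen

variable {F : Type*} [Field F] {ι : Type*} [Fintype ι] [DecidableEq ι]
variable {Γ : Type*} [CommGroup Γ]

/-- transvection as a unit -/
def TU (i j : ι) (hij : i ≠ j) (c : F) : GL ι F :=
  ⟨transvection i j c, transvection i j (-c),
   by rw [transvection_mul_transvection_same i j hij]; simp,
   by rw [transvection_mul_transvection_same i j hij]; simp⟩

@[simp] lemma TU_val (i j : ι) (hij : i ≠ j) (c : F) :
    (TU i j hij c : Matrix ι ι F) = transvection i j c := rfl

lemma TU_mul (i j : ι) (hij : i ≠ j) (c d : F) :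
    TU i j hij c * TU i j hij d = TU i j hij (c + d) :=
  Units.ext (transvection_mul_transvection_same i j hij c d)

/-- diagonal matrix of units as a unit -/
def DU (d : ι → Fˣ) : GL ι F :=
  ⟨diagonal fun i => (d i : F), diagonal fun i => ((d i)⁻¹ : Fˣ),
   by rw [diagonal_mul_diagonal]; simp [← Units.val_mul],
   by rw [diagonal_mul_diagonal]; simp [← Units.val_mul]⟩

@[simp] lemma DU_val (d : ι → Fˣ) : (DU d : Matrix ι ι F) = diagonal fun i => (d i : F) := rfl

lemma DU_mul (d e : ι → Fˣ) : DU d * DU e = DU (d * e) :=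
  Units.ext (by
    show diagonal _ * diagonal _ = diagonal _
    rw [diagonal_mul_diagonal]
    simp [← Units.val_mul])

lemma DU_inv (d : ι → Fˣ) : (DU d)⁻¹ = DU d⁻¹ := Units.ext rfl

@[simp] lemma DU_one : (DU 1 : GL ι F) = 1 := Units.ext (by simp [DU])

lemma diagonal_mul_std (d : ι → F) (i j : ι) (c : F) :
    diagonal d * Matrix.single i j c = Matrix.single i j (d i * c) := by
  ext a b
  rw [diagonal_mul]
  simp only [Matrix.single, of_apply]
  by_cases h : i = a
  · subst h; simp
  · simp [h]

lemma std_mul_diagonal (d : ι → F) (i j : ι) (c : F) :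
    Matrix.single i j c * diagonal d = Matrix.single i j (c * d j) := by
  ext a b
  rw [mul_diagonal]
  simp only [Matrix.single, of_apply]
  by_cases h : j = b
  · subst h; simp [mul_comm]
  · simp [h]

lemma DU_conj_TU (i j : ι) (hij : i ≠ j) (a : Fˣ) (c : F) :
    DU (Function.update 1 i a) * TU i j hij c * (DU (Function.update 1 i a))⁻¹
      = TU i j hij (a * c) := by
  rw [DU_inv]
  refine Units.ext ?_
  show diagonal _ * transvection i j c * diagonal _ = transvection i j ((a : F) * c)
  rw [transvection, transvection, mul_add, mul_one, add_mul, diagonal_mul_diagonal,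
    diagonal_mul_std, std_mul_diagonal]
  congr 1
  · convert diagonal_one with k
    rcases eq_or_ne k i with rfl | hk
    · simp [← Units.val_mul]
    · simp [Function.update_apply, hk]
  · congr 1
    have h1 : (Function.update (1 : ι → Fˣ) i a)⁻¹ j = 1 := by
      simp [Pi.inv_apply, Function.update_of_ne hij.symm]
    rw [h1]
    simp

omit [Fintype ι] in
lemma std_smul (i j : ι) (c : F) :
    Matrix.single i j c = c • Matrix.single i j (1 : F) := by
  rw [smul_single, smul_eq_mul, mul_one]

lemma six_transvec (i j : ι) (hij : i ≠ j) (c : Fˣ) :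
    transvection i j (c : F) * transvection j i (-(c : F)⁻¹) * transvection i j (c : F) *
      (transvection i j (-1 : F) * transvection j i (1 : F) * transvection i j (-1 : F)) =
      (1 : Matrix ι ι F) + Matrix.single i i ((c : F) - 1)
        + Matrix.single j j ((c : F)⁻¹ - 1) := by
  have hc : (c : F) ≠ 0 := c.ne_zero
  have hs1 : ∀ a d : ι, Matrix.single a i (1 : F) * Matrix.single i d (1 : F)
      = Matrix.single a d (1 : F) := by
    intro a d; simpa using Matrix.single_mul_single_same (i := a) (j := i) (c := (1 : F)) d 1
  have hs2 : ∀ a d : ι, Matrix.single a j (1 : F) * Matrix.single j d (1 : F)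
      = Matrix.single a d (1 : F) := by
    intro a d; simpa using Matrix.single_mul_single_same (i := a) (j := j) (c := (1 : F)) d 1
  have hz1 : ∀ a d : ι, Matrix.single a i (1 : F) * Matrix.single j d (1 : F) = 0 := by
    intro a d; exact Matrix.single_mul_single_of_ne (c := (1 : F)) a i j hij 1
  have hz2 : ∀ a d : ι, Matrix.single a j (1 : F) * Matrix.single i d (1 : F) = 0 := by
    intro a d; exact Matrix.single_mul_single_of_ne (c := (1 : F)) a j i hij.symm 1
  simp only [transvection]
  rw [std_smul i j ((c : F)), std_smul j i (-(c : F)⁻¹), std_smul i j ((-1 : F)),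
    std_smul j i ((1 : F)), std_smul i i ((c : F) - 1), std_smul j j ((c : F)⁻¹ - 1)]
  simp only [mul_add, add_mul, mul_one, one_mul, smul_mul_assoc, mul_smul_comm, smul_smul,
    hs1, hs2, hz1, hz2, smul_zero, add_zero, zero_add]
  match_scalars <;> (field_simp; try ring)

omit [Fintype ι] in
lemma diag_pair_eq (i j : ι) (hij : i ≠ j) (c : Fˣ) :
    (diagonal fun k => ((Function.update (Function.update (1 : ι → Fˣ) i c) j c⁻¹) k : F)) =
      (1 : Matrix ι ι F) + Matrix.single i i ((c : F) - 1)
        + Matrix.single j j ((c : F)⁻¹ - 1) := by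
  ext a b
  rcases eq_or_ne a b with rfl | hab
  · rcases eq_or_ne a i with rfl | hai
    · simp [Function.update_apply, hij.symm, hij, Matrix.single_apply_of_ne, one_apply]
    · rcases eq_or_ne a j with rfl | haj
      · simp [Function.update_apply, hij, hai, Matrix.single_apply_of_ne, one_apply,
          Units.val_inv_eq_inv_val]
      · simp [Function.update_apply, hai, haj, Matrix.single_apply_of_ne, one_apply,
          (Ne.symm hai), (Ne.symm haj)]
  · have h1 : Matrix.single i i ((c : F) - 1) a b = 0 := by
      apply Matrix.single_apply_of_ne; rintro ⟨rfl, rfl⟩; exact hab rfl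
    have h2 : Matrix.single j j ((c : F)⁻¹ - 1) a b = 0 := by
      apply Matrix.single_apply_of_ne; rintro ⟨rfl, rfl⟩; exact hab rfl
    simp [diagonal_apply_ne _ hab, h1, h2, one_apply_ne hab]

-- new material
lemma map_conj (μ : GL ι F →* Γ) (g h : GL ι F) : μ (g * h * g⁻¹) = μ h := by
  rw [_root_.map_mul, _root_.map_mul, map_inv, mul_comm (μ g)]
  exact mul_inv_cancel_right _ _

variable (a₀ : Fˣ) (ha₀ : ((a₀ : Fˣ) : F) ≠ 1)

include ha₀ in
lemma map_TU (μ : GL ι F →* Γ) (i j : ι) (hij : i ≠ j) (c : F) : μ (TU i j hij c) = 1 := by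
  have hsub : (a₀ : F) - 1 ≠ 0 := sub_ne_zero.mpr ha₀
  have key : ∀ x : F, μ (TU i j hij (((a₀ : F) - 1) * x)) = 1 := by
    intro x
    have h1 := map_conj μ (DU (Function.update 1 i a₀)) (TU i j hij x)
    rw [DU_conj_TU] at h1
    have h2 : TU i j hij ((a₀ : F) * x) = TU i j hij (((a₀ : F) - 1) * x) * TU i j hij x := by
      rw [TU_mul]; congr 1; ring
    rw [h2, _root_.map_mul] at h1
    exact mul_right_cancel (h1.trans (one_mul (μ (TU i j hij x))).symm)
  have h3 := key (((a₀ : F) - 1)⁻¹ * c)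
  rwa [mul_inv_cancel_left₀ hsub] at h3

include ha₀ in
lemma map_DU_pair (μ : GL ι F →* Γ) (i j : ι) (hij : i ≠ j) (c : Fˣ) :
    μ (DU (Function.update (Function.update 1 i c) j c⁻¹)) = 1 := by
  have hDU : (DU (Function.update (Function.update 1 i c) j c⁻¹) : GL ι F)
      = TU i j hij (c : F) * TU j i hij.symm (-(c : F)⁻¹) * TU i j hij (c : F) *
        (TU i j hij (-1 : F) * TU j i hij.symm (1 : F) * TU i j hij (-1 : F)) := by
    refine Units.ext ?_
    simp only [Units.val_mul, TU_val, DU_val]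
    rw [diag_pair_eq i j hij c]
    exact (six_transvec i j hij c).symm
  rw [hDU]
  simp only [_root_.map_mul, map_TU a₀ ha₀ μ]
  simp

include ha₀ in
lemma map_DU (μ : GL ι F →* Γ) (d : ι → Fˣ) (hd : (∏ k, d k) = 1) : μ (DU d) = 1 := by
  classical
  suffices H : ∀ (s : Finset ι) (d : ι → Fˣ), (∀ k, k ∉ s → d k = 1) → (∏ k, d k) = 1 →
      μ (DU d) = 1 from H Finset.univ d (fun k hk => absurd (Finset.mem_univ k) hk) hd
  intro s
  induction s using Finset.strongInduction with
  | _ s ih =>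
    intro d hsupp hprod
    rcases le_or_gt s.card 1 with hcard | hcard
    · have hone : d = 1 := by
        funext k
        by_cases hk : k ∈ s
        · have h1 : ∀ m, m ≠ k → d m = 1 := fun m hm =>
            hsupp m (fun hms => hm (Finset.card_le_one.mp hcard m hms k hk))
          have : (∏ m, d m) = d k :=
            Finset.prod_eq_single k (fun b _ hb => h1 b hb)
              (fun h => absurd (Finset.mem_univ k) h)
          rw [this] at hprod
          exact hprod
        · exact hsupp k hk
      rw [hone, DU_one, _root_.map_one]
    · obtain ⟨i, his, j, hjs, hij⟩ := Finset.one_lt_card.mp hcard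
      set d' : ι → Fˣ := Function.update (Function.update d j 1) i (d i * d j) with hd'
      set w : ι → Fˣ := Function.update (Function.update 1 i (d j)⁻¹) j (d j) with hw
      have hdd : d = d' * w := by
        funext k
        rcases eq_or_ne k i with rfl | hki
        · simp [hd', hw, Function.update_apply, hij, Function.update_self,
            Function.update_of_ne hij]
        · rcases eq_or_ne k j with rfl | hkj
          · simp [hd', hw, Function.update_of_ne hki, Function.update_self]
          · simp [hd', hw, Function.update_of_ne hki, Function.update_of_ne hkj]
      have hprodw : (∏ k, w k) = 1 := by
        rw [hw, Finset.prod_update_of_mem (Finset.mem_univ j),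
          Finset.prod_update_of_mem
            (Finset.mem_sdiff.mpr ⟨Finset.mem_univ i, by simp [hij]⟩)]
        simp
      have hprodd' : (∏ k, d' k) = 1 := by
        have h5 : (∏ k, d k) = (∏ k, d' k) * ∏ k, w k := by
          rw [hdd]; exact Finset.prod_mul_distrib
        rw [hprodw, mul_one] at h5
        rw [← h5, hprod]
      have hμw : μ (DU w) = 1 := by
        have : w = Function.update (Function.update (1 : ι → Fˣ) i ((d j)⁻¹)) j (((d j)⁻¹)⁻¹) := by
          rw [hw, inv_inv]
        rw [this]
        exact map_DU_pair a₀ ha₀ μ i j hij ((d j)⁻¹)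
      have hμd' : μ (DU d') = 1 := by
        refine ih (s.erase j) (Finset.erase_ssubset hjs) d' ?_ hprodd'
        intro k hk
        rcases eq_or_ne k j with rfl | hkj
        · rw [hd', Function.update_of_ne hij.symm, Function.update_self]
        · have hks : k ∉ s := fun hks => hk (Finset.mem_erase.mpr ⟨hkj, hks⟩)
          have hki : k ≠ i := fun h => hks (h ▸ his)
          rw [hd', Function.update_of_ne hki, Function.update_of_ne hkj]
          exact hsupp k hks
      rw [hdd, ← DU_mul, _root_.map_mul, hμw, hμd', mul_one]

include ha₀ in
lemma GLkill (μ : GL ι F →* Γ) (g : GL ι F) (hg : det (g : Matrix ι ι F) = 1) : μ g = 1 := by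
  classical
  obtain ⟨L, L', D, hD⟩ :=
    Matrix.Pivot.exists_list_transvec_mul_diagonal_mul_list_transvec (g : Matrix ι ι F)
  have hdet : (∏ k, D k) = 1 := by
    have h1 := hg
    rw [hD, det_mul, det_mul, TransvectionStruct.det_toMatrix_prod,
      TransvectionStruct.det_toMatrix_prod, det_diagonal, one_mul, mul_one] at h1
    exact h1
  have hDk : ∀ k, D k ≠ 0 := by
    intro k h
    rw [Finset.prod_eq_zero (Finset.mem_univ k) h] at hdet
    exact one_ne_zero hdet.symm
  set Du : ι → Fˣ := fun k => Units.mk0 (D k) (hDk k) with hDu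
  set fTU : Matrix.TransvectionStruct ι F → GL ι F := fun t => TU t.i t.j t.hij t.c with hfTU
  have hval : ∀ (L'' : List (Matrix.TransvectionStruct ι F)),
      (((L''.map fTU).prod : GL ι F) : Matrix ι ι F)
        = (L''.map Matrix.TransvectionStruct.toMatrix).prod := by
    intro L''
    rw [← Units.coeHom_apply, map_list_prod, List.map_map]
    congr 1
  have hgeq : g = (L.map fTU).prod * DU Du * (L'.map fTU).prod := by
    refine Units.ext ?_
    rw [Units.val_mul, Units.val_mul, hval, hval, DU_val, hD]
    congr 1
  rw [hgeq, _root_.map_mul, _root_.map_mul, map_DU a₀ ha₀ μ Du (by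
      rw [← Units.val_eq_one, ← Units.coeHom_apply, map_prod]
      simpa [hDu] using hdet)]
  have hL : ∀ (L'' : List (Matrix.TransvectionStruct ι F)), μ (L''.map fTU).prod = 1 := by
    intro L''
    rw [map_list_prod, List.map_map]
    apply List.prod_eq_one
    intro x hx
    simp only [List.mem_map] at hx
    obtain ⟨t, _, rfl⟩ := hx
    exact map_TU a₀ ha₀ μ t.i t.j t.hij t.c
  rw [hL, hL, one_mul, mul_one]

end GLGen

section Par

variable {F : Type*} [Field F] {n r : ℕ}

lemma coe_blockEquiv_inl (h : r ≤ n) (a : Fin r) :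
    ((blockEquiv n r h) (Sum.inl a) : ℕ) = a := by simp [blockEquiv]

lemma coe_blockEquiv_inr (h : r ≤ n) (b : Fin (n - r)) :
    ((blockEquiv n r h) (Sum.inr b) : ℕ) = r + b := by simp [blockEquiv]

/-- Build an element of the parabolic from blocks. -/
noncomputable def mkPar (h : r ≤ n) (A : Matrix (Fin r) (Fin r) F) (B : Matrix (Fin r) (Fin (n - r)) F)
    (D : Matrix (Fin (n - r)) (Fin (n - r)) F) (hA : IsUnit A.det) (hD : IsUnit D.det) :
    ↥(Parabolic F n r) := by
  refine ⟨⟨(fromBlocks A B 0 D).submatrix (blockEquiv n r h).symm (blockEquiv n r h).symm,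
    (fromBlocks A⁻¹ (-(A⁻¹ * B * D⁻¹)) 0 D⁻¹).submatrix (blockEquiv n r h).symm
      (blockEquiv n r h).symm, ?_, ?_⟩, ?_⟩
  · rw [submatrix_mul_equiv, fromBlocks_multiply]
    have h1 : A * (A⁻¹ * B * D⁻¹) = B * D⁻¹ := by
      rw [← Matrix.mul_assoc, ← Matrix.mul_assoc, Matrix.mul_nonsing_inv _ hA, Matrix.one_mul]
    have h2 : A * -(A⁻¹ * B * D⁻¹) + B * D⁻¹ = 0 := by
      rw [Matrix.mul_neg, h1, neg_add_cancel]
    rw [Matrix.mul_nonsing_inv _ hA, Matrix.mul_nonsing_inv _ hD, h2]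
    simp [fromBlocks_one, submatrix_one_equiv]
  · rw [submatrix_mul_equiv, fromBlocks_multiply]
    have h1 : A⁻¹ * B + -(A⁻¹ * B * D⁻¹) * D = 0 := by
      rw [Matrix.neg_mul, Matrix.mul_assoc (A⁻¹ * B), Matrix.nonsing_inv_mul _ hD,
        Matrix.mul_one, add_neg_cancel]
    rw [Matrix.nonsing_inv_mul _ hA, Matrix.nonsing_inv_mul _ hD, h1]
    simp [fromBlocks_one, submatrix_one_equiv]
  · intro i j hi hj
    show (fromBlocks A B 0 D) ((blockEquiv n r h).symm i) ((blockEquiv n r h).symm j) = 0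
    rcases hsi : (blockEquiv n r h).symm i with a | b
    · exfalso
      have : i = (blockEquiv n r h) (Sum.inl a) := by
        rw [← hsi, Equiv.apply_symm_apply]
      rw [this, coe_blockEquiv_inl] at hi
      omega
    · rcases hsj : (blockEquiv n r h).symm j with a | b'
      · simp [fromBlocks]
      · exfalso
        have : j = (blockEquiv n r h) (Sum.inr b') := by
          rw [← hsj, Equiv.apply_symm_apply]
        rw [this, coe_blockEquiv_inr] at hj
        omega

lemma mkPar_coe (h : r ≤ n) (A B D) (hA : IsUnit A.det) (hD : IsUnit D.det) :
    (((mkPar (F := F) h A B D hA hD : ↥(Parabolic F n r)) : GL (Fin n) F) : Matrix (Fin n) (Fin n) F)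
      = (fromBlocks A B 0 D).submatrix (blockEquiv n r h).symm (blockEquiv n r h).symm := rfl

lemma Ablock_mkPar (h : r ≤ n) (A B D) (hA : IsUnit A.det) (hD : IsUnit D.det) :
    Ablock r h ((mkPar (F := F) h A B D hA hD : ↥(Parabolic F n r)) : GL (Fin n) F) = A := by
  unfold Ablock
  rw [mkPar_coe, submatrix_submatrix]
  simp [Equiv.symm_comp_self]

lemma Dblock_mkPar (h : r ≤ n) (A B D) (hA : IsUnit A.det) (hD : IsUnit D.det) :
    Dblock r h ((mkPar (F := F) h A B D hA hD : ↥(Parabolic F n r)) : GL (Fin n) F) = D := by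
  unfold Dblock
  rw [mkPar_coe, submatrix_submatrix]
  simp [Equiv.symm_comp_self]

lemma mkPar_mul (h : r ≤ n) (A B D A' B' D') (hA : IsUnit (A : Matrix (Fin r) (Fin r) F).det)
    (hD : IsUnit (D : Matrix (Fin (n-r)) (Fin (n-r)) F).det) (hA' : IsUnit A'.det) (hD' : IsUnit D'.det) :
    mkPar h A B D hA hD * mkPar h A' B' D' hA' hD'
      = mkPar h (A * A') (A * B' + B * D') (D * D')
          (by rw [det_mul]; exact hA.mul hA') (by rw [det_mul]; exact hD.mul hD') := by
  refine Subtype.ext (Units.ext ?_)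
  show ((mkPar h A B D hA hD : ↥(Parabolic F n r)) : GL (Fin n) F).val
      * ((mkPar h A' B' D' hA' hD' : ↥(Parabolic F n r)) : GL (Fin n) F).val = _
  rw [mkPar_coe, mkPar_coe, mkPar_coe, submatrix_mul_equiv, fromBlocks_multiply]
  congr 2 <;> simp

lemma mkPar_ext (h : r ≤ n) {A B D A' B' D'} {hA : IsUnit (A : Matrix (Fin r) (Fin r) F).det}
    {hD : IsUnit (D : Matrix (Fin (n-r)) (Fin (n-r)) F).det} {hA' : IsUnit A'.det}
    {hD' : IsUnit D'.det} (e1 : A = A') (e2 : B = B') (e3 : D = D') :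
    mkPar h A B D hA hD = mkPar h A' B' D' hA' hD' := by
  subst e1; subst e2; subst e3; rfl

lemma eq_mkPar (h : r ≤ n) (p : ↥(Parabolic F n r)) :
    p = mkPar h (Ablock r h p.1) ((p.1.val.submatrix (blockEquiv n r h) (blockEquiv n r h)).toBlocks₁₂)
      (Dblock r h p.1) (isUnit_det_blocks h p.2).1 (isUnit_det_blocks h p.2).2 := by
  refine Subtype.ext (Units.ext ?_)
  rw [mkPar_coe]
  have h21 : (p.1.val.submatrix (blockEquiv n r h) (blockEquiv n r h)).toBlocks₂₁ = 0 := by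
    ext a b
    show p.1.val ((blockEquiv n r h) (Sum.inr a)) ((blockEquiv n r h) (Sum.inl b)) = 0
    apply p.2
    · rw [coe_blockEquiv_inr]; omega
    · rw [coe_blockEquiv_inl]; exact b.2
  have hfb : fromBlocks (Ablock r h p.1)
        ((p.1.val.submatrix (blockEquiv n r h) (blockEquiv n r h)).toBlocks₁₂) 0 (Dblock r h p.1)
      = p.1.val.submatrix (blockEquiv n r h) (blockEquiv n r h) := by
    rw [← h21]
    exact fromBlocks_toBlocks _
  rw [hfb, submatrix_submatrix]
  simp [Equiv.self_comp_symm]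

lemma AblockDetUnit_val (h : r ≤ n) (p : ↥(Parabolic F n r)) :
    ((AblockDetUnit h p.1 p.2 : Fˣ) : F) = (Ablock r h p.1).det :=
  IsUnit.unit_spec _

lemma DblockDetUnit_val (h : r ≤ n) (p : ↥(Parabolic F n r)) :
    ((DblockDetUnit h p.1 p.2 : Fˣ) : F) = (Dblock r h p.1).det :=
  IsUnit.unit_spec _

lemma Ablock_one (h : r ≤ n) : Ablock r h ((1 : ↥(Parabolic F n r)) : GL (Fin n) F) = 1 := by
  unfold Ablock
  have h1 : (((1 : ↥(Parabolic F n r)) : GL (Fin n) F) : Matrix (Fin n) (Fin n) F)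
      = (1 : Matrix (Fin n) (Fin n) F) := rfl
  rw [h1, submatrix_one_equiv, ← fromBlocks_one, toBlocks_fromBlocks₁₁]

lemma Dblock_one (h : r ≤ n) : Dblock r h ((1 : ↥(Parabolic F n r)) : GL (Fin n) F) = 1 := by
  unfold Dblock
  have h1 : (((1 : ↥(Parabolic F n r)) : GL (Fin n) F) : Matrix (Fin n) (Fin n) F)
      = (1 : Matrix (Fin n) (Fin n) F) := rfl
  rw [h1, submatrix_one_equiv, ← fromBlocks_one, toBlocks_fromBlocks₂₂]

lemma Ablock_mul (h : r ≤ n) (p q : ↥(Parabolic F n r)) :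
    Ablock r h ((p * q : ↥(Parabolic F n r)) : GL (Fin n) F)
      = Ablock r h p.1 * Ablock r h q.1 := by
  conv_lhs => rw [eq_mkPar h p, eq_mkPar h q]
  rw [mkPar_mul, Ablock_mkPar]

lemma Dblock_mul (h : r ≤ n) (p q : ↥(Parabolic F n r)) :
    Dblock r h ((p * q : ↥(Parabolic F n r)) : GL (Fin n) F)
      = Dblock r h p.1 * Dblock r h q.1 := by
  conv_lhs => rw [eq_mkPar h p, eq_mkPar h q]
  rw [mkPar_mul, Dblock_mkPar]

/-- The determinant of the `A`-block, as a monoid hom `P →* Fˣ`. -/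
noncomputable def detAhom (h : r ≤ n) : ↥(Parabolic F n r) →* Fˣ where
  toFun p := AblockDetUnit h p.1 p.2
  map_one' := Units.ext (by rw [AblockDetUnit_val, Ablock_one, det_one, Units.val_one])
  map_mul' p q := Units.ext (by
    rw [Units.val_mul, AblockDetUnit_val, AblockDetUnit_val, AblockDetUnit_val,
      Ablock_mul, det_mul])

/-- The determinant of the `D`-block, as a monoid hom `P →* Fˣ`. -/
noncomputable def detDhom (h : r ≤ n) : ↥(Parabolic F n r) →* Fˣ where
  toFun p := DblockDetUnit h p.1 p.2
  map_one' := Units.ext (by rw [DblockDetUnit_val, Dblock_one, det_one, Units.val_one])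
  map_mul' p q := Units.ext (by
    rw [Units.val_mul, DblockDetUnit_val, DblockDetUnit_val, DblockDetUnit_val,
      Dblock_mul, det_mul])

lemma mkPar_one (h : r ≤ n) (h1 : IsUnit (1 : Matrix (Fin r) (Fin r) F).det)
    (h2 : IsUnit (1 : Matrix (Fin (n - r)) (Fin (n - r)) F).det) :
    mkPar h 1 0 1 h1 h2 = 1 := by
  refine Subtype.ext (Units.ext ?_)
  show ((mkPar h 1 0 1 h1 h2 : ↥(Parabolic F n r)) : GL (Fin n) F).val = _
  rw [mkPar_coe, fromBlocks_one, submatrix_one_equiv]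
  rfl

/-- Embedding of `GL_r` in the parabolic. -/
noncomputable def iota1 (h : r ≤ n) : GL (Fin r) F →* ↥(Parabolic F n r) where
  toFun g := mkPar h (g : Matrix (Fin r) (Fin r) F) 0 1
    ((isUnit_iff_isUnit_det _).mp g.isUnit) (by simp)
  map_one' := by
    show mkPar h ((1 : GL (Fin r) F) : Matrix (Fin r) (Fin r) F) 0 1
      ((isUnit_iff_isUnit_det _).mp (1 : GL (Fin r) F).isUnit) (by simp) = 1
    exact (mkPar_ext h (hA' := by simp) (hD' := by simp) (Units.val_one) rfl rfl).trans
      (mkPar_one h (by simp) (by simp))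
  map_mul' g g' := by
    show mkPar h ((g * g' : GL (Fin r) F) : Matrix (Fin r) (Fin r) F) 0 1
      ((isUnit_iff_isUnit_det _).mp (g * g').isUnit) (by simp) = _
    rw [mkPar_mul]
    exact mkPar_ext h (Units.val_mul g g') (by simp) (by simp)

/-- Embedding of `GL_{n-r}` in the parabolic. -/
noncomputable def iota2 (h : r ≤ n) : GL (Fin (n - r)) F →* ↥(Parabolic F n r) where
  toFun g := mkPar h 1 0 (g : Matrix (Fin (n - r)) (Fin (n - r)) F)
    (by simp) ((isUnit_iff_isUnit_det _).mp g.isUnit)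
  map_one' := by
    show mkPar h 1 0 ((1 : GL (Fin (n - r)) F) : Matrix (Fin (n - r)) (Fin (n - r)) F)
      (by simp) ((isUnit_iff_isUnit_det _).mp (1 : GL (Fin (n - r)) F).isUnit) = 1
    exact (mkPar_ext h (hA' := by simp) (hD' := by simp) rfl rfl (Units.val_one)).trans
      (mkPar_one h (by simp) (by simp))
  map_mul' g g' := by
    show mkPar h 1 0 ((g * g' : GL (Fin (n - r)) F) : Matrix (Fin (n - r)) (Fin (n - r)) F)
      (by simp) ((isUnit_iff_isUnit_det _).mp (g * g').isUnit) = _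
    rw [mkPar_mul]
    exact mkPar_ext h (by simp) (by simp) (Units.val_mul g g')

@[simp] lemma iota1_apply (h : r ≤ n) (g : GL (Fin r) F) :
    iota1 h g = mkPar h (g : Matrix (Fin r) (Fin r) F) 0 1
      ((isUnit_iff_isUnit_det _).mp g.isUnit) (by simp) := rfl

@[simp] lemma iota2_apply (h : r ≤ n) (g : GL (Fin (n - r)) F) :
    iota2 h g = mkPar h 1 0 (g : Matrix (Fin (n - r)) (Fin (n - r)) F)
      (by simp) ((isUnit_iff_isUnit_det _).mp g.isUnit) := rfl

/-- The unipotent radical elements. -/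
noncomputable def uP (h : r ≤ n) (X : Matrix (Fin r) (Fin (n - r)) F) : ↥(Parabolic F n r) :=
  mkPar h 1 X 1 (by simp) (by simp)

lemma uP_mul (h : r ≤ n) (X Y : Matrix (Fin r) (Fin (n - r)) F) :
    uP h X * uP h Y = uP h (X + Y) := by
  unfold uP
  rw [mkPar_mul]
  exact mkPar_ext h (by simp) (by simp [add_comm]) (by simp)

lemma kill {Γ : Type*} [CommGroup Γ] (h : r ≤ n) (Λ : ↥(Parabolic F n r) →* Γ)
    (a₀ : Fˣ) (ha₀ : ((a₀ : Fˣ) : F) ≠ 1) (p : ↥(Parabolic F n r))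
    (hpA : (Ablock r h p.1).det = 1) (hpD : (Dblock r h p.1).det = 1) : Λ p = 1 := by
  classical
  have huP : ∀ X, Λ (uP h X) = 1 := by
    have key : ∀ X, Λ (uP h (((a₀ : F) - 1) • X)) = 1 := by
      intro X
      have hcomm : iota1 h (DU fun _ : Fin r => a₀) * uP h X
          = uP h ((a₀ : F) • X) * iota1 h (DU fun _ : Fin r => a₀) := by
        rw [iota1_apply]
        unfold uP
        rw [mkPar_mul, mkPar_mul]
        refine mkPar_ext h (by simp) ?_ (by simp)
        show ((DU fun _ : Fin r => a₀ : GL (Fin r) F) : Matrix (Fin r) (Fin r) F) * X + 0 * 1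
            = 1 * 0 + ((a₀ : F) • X) * 1
        rw [DU_val]
        ext i j
        simp [diagonal_mul]
      have h2 := congrArg Λ hcomm
      rw [_root_.map_mul, _root_.map_mul,
        mul_comm (Λ (uP h ((a₀ : F) • X)))] at h2
      have h3 : Λ (uP h X) = Λ (uP h ((a₀ : F) • X)) := mul_left_cancel h2
      have h4 : uP h ((a₀ : F) • X) = uP h (((a₀ : F) - 1) • X) * uP h X := by
        rw [uP_mul]
        congr 1
        rw [sub_smul, one_smul, sub_add_cancel]
      have h5 : Λ (uP h X) = Λ (uP h (((a₀ : F) - 1) • X)) * Λ (uP h X) := by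
        rw [← _root_.map_mul, ← h4, ← h3]
      exact (right_eq_mul.mp h5)
    intro X
    have h6 := key (((a₀ : F) - 1)⁻¹ • X)
    rwa [smul_smul, mul_inv_cancel₀ (sub_ne_zero.mpr ha₀), one_smul] at h6
  set A := Ablock r h p.1 with hAdef
  set B := (p.1.val.submatrix (blockEquiv n r h) (blockEquiv n r h)).toBlocks₁₂ with hBdef
  set D := Dblock r h p.1 with hDdef
  have hA : IsUnit A.det := (isUnit_det_blocks h p.2).1
  have hD : IsUnit D.det := (isUnit_det_blocks h p.2).2
  set Au : GL (Fin r) F := ⟨A, A⁻¹, mul_nonsing_inv _ hA, nonsing_inv_mul _ hA⟩ with hAu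
  set Du : GL (Fin (n - r)) F := ⟨D, D⁻¹, mul_nonsing_inv _ hD, nonsing_inv_mul _ hD⟩ with hDu
  have hdecomp : p = iota1 h Au * iota2 h Du * uP h (A⁻¹ * B) := by
    rw [iota1_apply, iota2_apply]
    unfold uP
    rw [mkPar_mul, mkPar_mul]
    refine (eq_mkPar h p).trans (mkPar_ext h ?_ ?_ ?_)
    · show A = ((Au : Matrix (Fin r) (Fin r) F) * 1) * 1
      simp [hAu]
    · show B = ((Au : Matrix (Fin r) (Fin r) F) * 1) * (A⁻¹ * B)
        + ((Au : Matrix (Fin r) (Fin r) F) * 0 + 0 * (Du : Matrix (Fin (n - r)) (Fin (n - r)) F)) * 1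
      have : (Au : Matrix (Fin r) (Fin r) F) = A := rfl
      rw [this]
      simp only [Matrix.mul_one, Matrix.mul_zero, Matrix.zero_mul, add_zero, zero_add]
      rw [← Matrix.mul_assoc, mul_nonsing_inv _ hA, Matrix.one_mul]
    · show D = (1 * (Du : Matrix (Fin (n - r)) (Fin (n - r)) F)) * 1
      simp [hDu]
  rw [hdecomp, _root_.map_mul, _root_.map_mul]
  have k1 : Λ (iota1 h Au) = 1 :=
    GLkill a₀ ha₀ (Λ.comp (iota1 h)) Au (by exact hpA)
  have k2 : Λ (iota2 h Du) = 1 :=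
    GLkill a₀ ha₀ (Λ.comp (iota2 h)) Du (by exact hpD)
  rw [k1, k2, huP, one_mul, one_mul]

/-- One-parameter diagonal subgroup in the `A`-block. -/
noncomputable def deltaA (h : r ≤ n) (i0 : Fin r) : Fˣ →* ↥(Parabolic F n r) where
  toFun a := iota1 h (DU (Function.update 1 i0 a))
  map_one' := by
    show iota1 h (DU (Function.update 1 i0 1)) = 1
    rw [show Function.update (1 : Fin r → Fˣ) i0 1 = 1 by simp, DU_one, _root_.map_one]
  map_mul' a b := by
    have hupd : Function.update (1 : Fin r → Fˣ) i0 (a * b)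
        = Function.update (1 : Fin r → Fˣ) i0 a * Function.update (1 : Fin r → Fˣ) i0 b := by
      funext k
      rcases eq_or_ne k i0 with rfl | hk
      · simp
      · simp [Function.update_of_ne hk]
    show iota1 h (DU (Function.update 1 i0 (a * b)))
        = iota1 h (DU (Function.update 1 i0 a)) * iota1 h (DU (Function.update 1 i0 b))
    rw [hupd, ← DU_mul, _root_.map_mul]

/-- One-parameter diagonal subgroup in the `D`-block. -/
noncomputable def deltaD (h : r ≤ n) (j0 : Fin (n - r)) : Fˣ →* ↥(Parabolic F n r) where
  toFun a := iota2 h (DU (Function.update 1 j0 a))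
  map_one' := by
    show iota2 h (DU (Function.update 1 j0 1)) = 1
    rw [show Function.update (1 : Fin (n - r) → Fˣ) j0 1 = 1 by simp, DU_one, _root_.map_one]
  map_mul' a b := by
    have hupd : Function.update (1 : Fin (n - r) → Fˣ) j0 (a * b)
        = Function.update (1 : Fin (n - r) → Fˣ) j0 a * Function.update (1 : Fin (n - r) → Fˣ) j0 b := by
      funext k
      rcases eq_or_ne k j0 with rfl | hk
      · simp
      · simp [Function.update_of_ne hk]
    show iota2 h (DU (Function.update 1 j0 (a * b)))
        = iota2 h (DU (Function.update 1 j0 a)) * iota2 h (DU (Function.update 1 j0 b))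
    rw [hupd, ← DU_mul, _root_.map_mul]

lemma coe_update_one {m : ℕ} (i0 : Fin m) (a : Fˣ) :
    (fun k => ((Function.update (1 : Fin m → Fˣ) i0 a k : Fˣ) : F))
      = Function.update (fun _ : Fin m => (1 : F)) i0 (a : F) := by
  funext k
  rcases eq_or_ne k i0 with rfl | hk
  · simp
  · simp [Function.update_of_ne hk]

lemma prod_coe_update_one {m : ℕ} (i0 : Fin m) (a : Fˣ) :
    (∏ k, ((Function.update (1 : Fin m → Fˣ) i0 a k : Fˣ) : F)) = (a : F) := by
  rw [show (fun k => ((Function.update (1 : Fin m → Fˣ) i0 a k : Fˣ) : F))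
      = Function.update (fun _ : Fin m => (1 : F)) i0 (a : F) from coe_update_one i0 a,
    Finset.prod_update_of_mem (Finset.mem_univ i0)]
  simp

lemma detA_deltaA (h : r ≤ n) (i0 : Fin r) (a : Fˣ) : detAhom h (deltaA h i0 a) = a := by
  refine Units.ext ?_
  show ((AblockDetUnit h (deltaA h i0 a).1 (deltaA h i0 a).2 : Fˣ) : F) = (a : F)
  rw [AblockDetUnit_val]
  have h1 : Ablock r h ((deltaA h i0 a : ↥(Parabolic F n r)) : GL (Fin n) F)
      = diagonal (fun k => ((Function.update (1 : Fin r → Fˣ) i0 a k : Fˣ) : F)) := by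
    show Ablock r h
        ((iota1 h (DU (Function.update 1 i0 a)) : ↥(Parabolic F n r)) : GL (Fin n) F) = _
    rw [iota1_apply, Ablock_mkPar, DU_val]
  rw [h1, det_diagonal, prod_coe_update_one]

lemma detD_deltaA (h : r ≤ n) (i0 : Fin r) (a : Fˣ) : detDhom h (deltaA h i0 a) = 1 := by
  refine Units.ext ?_
  show ((DblockDetUnit h (deltaA h i0 a).1 (deltaA h i0 a).2 : Fˣ) : F) = 1
  rw [DblockDetUnit_val]
  have h1 : Dblock r h ((deltaA h i0 a : ↥(Parabolic F n r)) : GL (Fin n) F) = 1 := by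
    show Dblock r h
        ((iota1 h (DU (Function.update 1 i0 a)) : ↥(Parabolic F n r)) : GL (Fin n) F) = _
    rw [iota1_apply, Dblock_mkPar]
  rw [h1, det_one]

lemma detA_deltaD (h : r ≤ n) (j0 : Fin (n - r)) (a : Fˣ) : detAhom h (deltaD h j0 a) = 1 := by
  refine Units.ext ?_
  show ((AblockDetUnit h (deltaD h j0 a).1 (deltaD h j0 a).2 : Fˣ) : F) = 1
  rw [AblockDetUnit_val]
  have h1 : Ablock r h ((deltaD h j0 a : ↥(Parabolic F n r)) : GL (Fin n) F) = 1 := by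
    show Ablock r h
        ((iota2 h (DU (Function.update 1 j0 a)) : ↥(Parabolic F n r)) : GL (Fin n) F) = _
    rw [iota2_apply, Ablock_mkPar]
  rw [h1, det_one]

lemma detD_deltaD (h : r ≤ n) (j0 : Fin (n - r)) (a : Fˣ) : detDhom h (deltaD h j0 a) = a := by
  refine Units.ext ?_
  show ((DblockDetUnit h (deltaD h j0 a).1 (deltaD h j0 a).2 : Fˣ) : F) = (a : F)
  rw [DblockDetUnit_val]
  have h1 : Dblock r h ((deltaD h j0 a : ↥(Parabolic F n r)) : GL (Fin n) F)
      = diagonal (fun k => ((Function.update (1 : Fin (n - r) → Fˣ) j0 a k : Fˣ) : F)) := by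
    show Dblock r h
        ((iota2 h (DU (Function.update 1 j0 a)) : ↥(Parabolic F n r)) : GL (Fin n) F) = _
    rw [iota2_apply, Dblock_mkPar, DU_val]
  rw [h1, det_diagonal, prod_coe_update_one]

end Par

section Topo

variable {F : Type*} [NontriviallyNormedField F] {n r : ℕ}

lemma cont_val : Continuous fun p : ↥(Parabolic F n r) =>
    ((p : GL (Fin n) F) : Matrix (Fin n) (Fin n) F) :=
  Units.continuous_val.comp continuous_subtype_val

lemma cont_Ablock (h : r ≤ n) : Continuous fun p : ↥(Parabolic F n r) => Ablock r h p.1 := by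
  apply continuous_matrix
  intro i j
  show Continuous fun p : ↥(Parabolic F n r) =>
    ((p : GL (Fin n) F) : Matrix (Fin n) (Fin n) F)
      ((blockEquiv n r h) (Sum.inl i)) ((blockEquiv n r h) (Sum.inl j))
  exact (continuous_apply _).comp ((continuous_apply _).comp cont_val)

lemma cont_Dblock (h : r ≤ n) : Continuous fun p : ↥(Parabolic F n r) => Dblock r h p.1 := by
  apply continuous_matrix
  intro i j
  show Continuous fun p : ↥(Parabolic F n r) =>
    ((p : GL (Fin n) F) : Matrix (Fin n) (Fin n) F)
      ((blockEquiv n r h) (Sum.inr i)) ((blockEquiv n r h) (Sum.inr j))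
  exact (continuous_apply _).comp ((continuous_apply _).comp cont_val)

lemma cont_detAU (h : r ≤ n) :
    Continuous fun p : ↥(Parabolic F n r) => AblockDetUnit h p.1 p.2 := by
  apply Units.continuous_iff.mpr
  constructor
  · have h1 : (Units.val ∘ fun p : ↥(Parabolic F n r) => AblockDetUnit h p.1 p.2)
        = fun p : ↥(Parabolic F n r) => (Ablock r h p.1).det :=
      funext fun p => AblockDetUnit_val h p
    rw [h1]
    exact (cont_Ablock h).matrix_det
  · have h1 : (fun p : ↥(Parabolic F n r) => (((AblockDetUnit h p.1 p.2)⁻¹ : Fˣ) : F))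
        = fun p : ↥(Parabolic F n r) => ((Ablock r h p.1).det)⁻¹ := by
      funext p
      rw [Units.val_inv_eq_inv_val, AblockDetUnit_val h p]
    rw [h1]
    exact ((cont_Ablock h).matrix_det).inv₀ fun p => ((isUnit_det_blocks h p.2).1).ne_zero

lemma cont_detDU (h : r ≤ n) :
    Continuous fun p : ↥(Parabolic F n r) => DblockDetUnit h p.1 p.2 := by
  apply Units.continuous_iff.mpr
  constructor
  · have h1 : (Units.val ∘ fun p : ↥(Parabolic F n r) => DblockDetUnit h p.1 p.2)
        = fun p : ↥(Parabolic F n r) => (Dblock r h p.1).det :=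
      funext fun p => DblockDetUnit_val h p
    rw [h1]
    exact (cont_Dblock h).matrix_det
  · have h1 : (fun p : ↥(Parabolic F n r) => (((DblockDetUnit h p.1 p.2)⁻¹ : Fˣ) : F))
        = fun p : ↥(Parabolic F n r) => ((Dblock r h p.1).det)⁻¹ := by
      funext p
      rw [Units.val_inv_eq_inv_val, DblockDetUnit_val h p]
    rw [h1]
    exact ((cont_Dblock h).matrix_det).inv₀ fun p => ((isUnit_det_blocks h p.2).2).ne_zero

lemma cont_inv_units : Continuous fun a : Fˣ => a⁻¹ := by
  apply Units.continuous_iff.mpr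
  refine ⟨Units.continuous_coe_inv, ?_⟩
  have h1 : (fun a : Fˣ => (((a⁻¹ : Fˣ)⁻¹ : Fˣ) : F)) = fun a : Fˣ => (a : F) := by
    funext a; rw [inv_inv]
  exact h1 ▸ Units.continuous_val

lemma cont_deltaA_val (h : r ≤ n) (i0 : Fin r) :
    Continuous fun a : Fˣ =>
      (((deltaA h i0 a : ↥(Parabolic F n r)) : GL (Fin n) F) : Matrix (Fin n) (Fin n) F) := by
  apply continuous_matrix
  intro s t
  show Continuous fun a : Fˣ =>
    (fromBlocks (diagonal fun k => ((Function.update (1 : Fin r → Fˣ) i0 a k : Fˣ) : F))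
        0 0 (1 : Matrix (Fin (n - r)) (Fin (n - r)) F))
      ((blockEquiv n r h).symm s) ((blockEquiv n r h).symm t)
  rcases hs : (blockEquiv n r h).symm s with k | k <;>
    rcases ht : (blockEquiv n r h).symm t with l | l
  · show Continuous fun a : Fˣ =>
      diagonal (fun k => ((Function.update (1 : Fin r → Fˣ) i0 a k : Fˣ) : F)) k l
    rcases eq_or_ne k l with rfl | hkl
    · simp only [diagonal_apply_eq]
      rcases eq_or_ne k i0 with rfl | hki
      · simp only [Function.update_self]
        exact Units.continuous_val
      · simp only [Function.update_of_ne hki]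
        exact continuous_const
    · simp only [diagonal_apply_ne _ hkl]
      exact continuous_const
  · exact continuous_const
  · exact continuous_const
  · exact continuous_const

lemma cont_deltaA (h : r ≤ n) (i0 : Fin r) :
    Continuous fun a : Fˣ => deltaA h i0 a := by
  have hGL : Continuous fun a : Fˣ => ((deltaA h i0 a : ↥(Parabolic F n r)) : GL (Fin n) F) := by
    apply Units.continuous_iff.mpr
    constructor
    · exact cont_deltaA_val h i0
    · have h1 : (fun a : Fˣ =>
            (((((deltaA h i0 a : ↥(Parabolic F n r)) : GL (Fin n) F))⁻¹ : GL (Fin n) F) :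
              Matrix (Fin n) (Fin n) F))
          = fun a : Fˣ =>
            (((deltaA h i0 a⁻¹ : ↥(Parabolic F n r)) : GL (Fin n) F) :
              Matrix (Fin n) (Fin n) F) := by
        funext a
        rw [_root_.map_inv]
        rfl
      rw [h1]
      exact (cont_deltaA_val h i0).comp cont_inv_units
  exact hGL.subtype_mk _

lemma cont_deltaD_val (h : r ≤ n) (j0 : Fin (n - r)) :
    Continuous fun a : Fˣ =>
      (((deltaD h j0 a : ↥(Parabolic F n r)) : GL (Fin n) F) : Matrix (Fin n) (Fin n) F) := by
  apply continuous_matrix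
  intro s t
  show Continuous fun a : Fˣ =>
    (fromBlocks (1 : Matrix (Fin r) (Fin r) F) 0 0
        (diagonal fun k => ((Function.update (1 : Fin (n - r) → Fˣ) j0 a k : Fˣ) : F)))
      ((blockEquiv n r h).symm s) ((blockEquiv n r h).symm t)
  rcases hs : (blockEquiv n r h).symm s with k | k <;>
    rcases ht : (blockEquiv n r h).symm t with l | l
  · exact continuous_const
  · exact continuous_const
  · exact continuous_const
  · show Continuous fun a : Fˣ =>
      diagonal (fun k => ((Function.update (1 : Fin (n - r) → Fˣ) j0 a k : Fˣ) : F)) k l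
    rcases eq_or_ne k l with rfl | hkl
    · simp only [diagonal_apply_eq]
      rcases eq_or_ne k j0 with rfl | hkj
      · simp only [Function.update_self]
        exact Units.continuous_val
      · simp only [Function.update_of_ne hkj]
        exact continuous_const
    · simp only [diagonal_apply_ne _ hkl]
      exact continuous_const

lemma cont_deltaD (h : r ≤ n) (j0 : Fin (n - r)) :
    Continuous fun a : Fˣ => deltaD h j0 a := by
  have hGL : Continuous fun a : Fˣ => ((deltaD h j0 a : ↥(Parabolic F n r)) : GL (Fin n) F) := by
    apply Units.continuous_iff.mpr
    constructor
    · exact cont_deltaD_val h j0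
    · have h1 : (fun a : Fˣ =>
            (((((deltaD h j0 a : ↥(Parabolic F n r)) : GL (Fin n) F))⁻¹ : GL (Fin n) F) :
              Matrix (Fin n) (Fin n) F))
          = fun a : Fˣ =>
            (((deltaD h j0 a⁻¹ : ↥(Parabolic F n r)) : GL (Fin n) F) :
              Matrix (Fin n) (Fin n) F) := by
        funext a
        rw [_root_.map_inv]
        rfl
      rw [h1]
      exact (cont_deltaD_val h j0).comp cont_inv_units
  exact hGL.subtype_mk _

end Topo

end ParAux

/-- Sending a pair `(λ₁, λ₂)` of continuous homomorphisms `F^× → N` to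
`p ↦ λ₁(det A_p) + λ₂(det D_p)` is a bijection onto the set of continuous homomorphisms
`P → N`: the recipe always produces a continuous homomorphism on `P`, and every continuous
homomorphism `P → N` arises this way from a unique pair. -/
theorem continuousHom_from_parabolic_classification
    {F : Type*} [NontriviallyNormedField F] [IsUltrametricDist F]
    [CompleteSpace F] [LocallyCompactSpace F]
    {n r : ℕ} (hn : 2 ≤ n) (hr : 0 < r) (hrn : r < n)
    {N : Type*} [AddCommGroup N] [TopologicalSpace N] [IsTopologicalAddGroup N] :
    (∀ l₁ l₂ : Fˣ → N, Continuous l₁ → (∀ a b : Fˣ, l₁ (a * b) = l₁ a + l₁ b) →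
      Continuous l₂ → (∀ a b : Fˣ, l₂ (a * b) = l₂ a + l₂ b) →
      Continuous (fun p : ↥(Parabolic F n r) =>
        l₁ (AblockDetUnit hrn.le p.1 p.2) + l₂ (DblockDetUnit hrn.le p.1 p.2)) ∧
      ∀ p q : ↥(Parabolic F n r),
        l₁ (AblockDetUnit hrn.le (p * q).1 (p * q).2)
          + l₂ (DblockDetUnit hrn.le (p * q).1 (p * q).2)
        = (l₁ (AblockDetUnit hrn.le p.1 p.2) + l₂ (DblockDetUnit hrn.le p.1 p.2))
          + (l₁ (AblockDetUnit hrn.le q.1 q.2) + l₂ (DblockDetUnit hrn.le q.1 q.2))) ∧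
    (∀ lam : ↥(Parabolic F n r) → N, Continuous lam →
      (∀ p q : ↥(Parabolic F n r), lam (p * q) = lam p + lam q) →
      ∃! l : (Fˣ → N) × (Fˣ → N),
        (Continuous l.1 ∧ ∀ a b : Fˣ, l.1 (a * b) = l.1 a + l.1 b) ∧
        (Continuous l.2 ∧ ∀ a b : Fˣ, l.2 (a * b) = l.2 a + l.2 b) ∧
        ∀ p : ↥(Parabolic F n r),
          lam p = l.1 (AblockDetUnit hrn.le p.1 p.2) + l.2 (DblockDetUnit hrn.le p.1 p.2)) := by
  classical
  obtain ⟨x0, hx0⟩ := NormedField.exists_one_lt_norm (α := F)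
  have hx0ne : x0 ≠ 0 := by
    intro hz; rw [hz, norm_zero] at hx0; linarith
  set a₀ : Fˣ := Units.mk0 x0 hx0ne with ha₀def
  have ha₀ : ((a₀ : Fˣ) : F) ≠ 1 := by
    intro h1
    have : (x0 : F) = 1 := h1
    rw [this] at hx0
    simp at hx0
  have hrn2 : 0 < n - r := by omega
  set i0 : Fin r := ⟨0, hr⟩ with hi0
  set j0 : Fin (n - r) := ⟨0, hrn2⟩ with hj0
  constructor
  · intro l₁ l₂ hc1 hm1 hc2 hm2
    constructor
    · exact (hc1.comp (ParAux.cont_detAU hrn.le)).add (hc2.comp (ParAux.cont_detDU hrn.le))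
    · intro p q
      have h1 : AblockDetUnit hrn.le (p * q).1 (p * q).2
          = AblockDetUnit hrn.le p.1 p.2 * AblockDetUnit hrn.le q.1 q.2 :=
        _root_.map_mul (ParAux.detAhom hrn.le) p q
      have h2 : DblockDetUnit hrn.le (p * q).1 (p * q).2
          = DblockDetUnit hrn.le p.1 p.2 * DblockDetUnit hrn.le q.1 q.2 :=
        _root_.map_mul (ParAux.detDhom hrn.le) p q
      rw [h1, h2, hm1, hm2]
      abel
  · intro lam hcont hadd
    set Λ : ↥(Parabolic F n r) →* Multiplicative N :=
      MonoidHom.mk' (fun p => Multiplicative.ofAdd (lam p))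
        (fun p q => by
          show Multiplicative.ofAdd (lam (p * q))
              = Multiplicative.ofAdd (lam p) * Multiplicative.ofAdd (lam q)
          rw [hadd]; rfl) with hΛ
    set l₁ : Fˣ → N := fun a => lam (ParAux.deltaA hrn.le i0 a) with hl₁
    set l₂ : Fˣ → N := fun d => lam (ParAux.deltaD hrn.le j0 d) with hl₂
    have hl₁c : Continuous l₁ := hcont.comp (ParAux.cont_deltaA hrn.le i0)
    have hl₂c : Continuous l₂ := hcont.comp (ParAux.cont_deltaD hrn.le j0)
    have hl₁m : ∀ a b : Fˣ, l₁ (a * b) = l₁ a + l₁ b := by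
      intro a b
      rw [hl₁]
      show lam (ParAux.deltaA hrn.le i0 (a * b)) = _
      rw [_root_.map_mul, hadd]
    have hl₂m : ∀ a b : Fˣ, l₂ (a * b) = l₂ a + l₂ b := by
      intro a b
      rw [hl₂]
      show lam (ParAux.deltaD hrn.le j0 (a * b)) = _
      rw [_root_.map_mul, hadd]
    have hprop : ∀ p : ↥(Parabolic F n r),
        lam p = l₁ (AblockDetUnit hrn.le p.1 p.2) + l₂ (DblockDetUnit hrn.le p.1 p.2) := by
      intro p
      set a : Fˣ := ParAux.detAhom hrn.le p with ha
      set d : Fˣ := ParAux.detDhom hrn.le p with hd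
      set q : ↥(Parabolic F n r) :=
        (ParAux.deltaD hrn.le j0 d)⁻¹ * ((ParAux.deltaA hrn.le i0 a)⁻¹ * p) with hq
      have hpq : p = ParAux.deltaA hrn.le i0 a * (ParAux.deltaD hrn.le j0 d * q) := by
        rw [hq]; group
      have hqA : ParAux.detAhom hrn.le q = 1 := by
        rw [hq, _root_.map_mul, _root_.map_mul, _root_.map_inv, _root_.map_inv,
          ParAux.detA_deltaD, ParAux.detA_deltaA, ← ha]
        group
      have hqD : ParAux.detDhom hrn.le q = 1 := by
        rw [hq, _root_.map_mul, _root_.map_mul, _root_.map_inv, _root_.map_inv,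
          ParAux.detD_deltaD, ParAux.detD_deltaA, ← hd]
        group
      have hΛq : Λ q = 1 := by
        refine ParAux.kill hrn.le Λ a₀ ha₀ q ?_ ?_
        · have h3 : ((ParAux.detAhom hrn.le q : Fˣ) : F) = (Ablock r hrn.le q.1).det :=
            ParAux.AblockDetUnit_val hrn.le q
          rw [← h3, hqA, Units.val_one]
        · have h3 : ((ParAux.detDhom hrn.le q : Fˣ) : F) = (Dblock r hrn.le q.1).det :=
            ParAux.DblockDetUnit_val hrn.le q
          rw [← h3, hqD, Units.val_one]
      have hlamq : lam q = 0 := by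
        have h4 : Multiplicative.ofAdd (lam q) = 1 := hΛq
        exact ofAdd_eq_one.mp h4
      have hstep : lam p = l₁ a + l₂ d := by
        rw [hpq, hadd, hadd, hlamq, add_zero]
      rw [hstep]
      congr 1
    refine ⟨(l₁, l₂), ⟨⟨hl₁c, hl₁m⟩, ⟨hl₂c, hl₂m⟩, hprop⟩, ?_⟩
    rintro ⟨m₁, m₂⟩ ⟨⟨hm₁c, hm₁m⟩, ⟨hm₂c, hm₂m⟩, hmp⟩
    have hm₁1 : m₁ 1 = 0 := by
      have h5 := hm₁m 1 1
      rw [one_mul] at h5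
      exact (left_eq_add.mp h5)
    have hm₂1 : m₂ 1 = 0 := by
      have h5 := hm₂m 1 1
      rw [one_mul] at h5
      exact (left_eq_add.mp h5)
    have e₁ : m₁ = l₁ := by
      funext a
      have h6 := hmp (ParAux.deltaA hrn.le i0 a)
      have h7 : AblockDetUnit hrn.le (ParAux.deltaA hrn.le i0 a).1
          (ParAux.deltaA hrn.le i0 a).2 = a := ParAux.detA_deltaA hrn.le i0 a
      have h8 : DblockDetUnit hrn.le (ParAux.deltaA hrn.le i0 a).1
          (ParAux.deltaA hrn.le i0 a).2 = 1 := ParAux.detD_deltaA hrn.le i0 a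
      rw [h7, h8] at h6
      have h6' : lam (ParAux.deltaA hrn.le i0 a) = m₁ a + m₂ 1 := h6
      rw [hm₂1, add_zero] at h6'
      exact h6'.symm
    have e₂ : m₂ = l₂ := by
      funext a
      have h6 := hmp (ParAux.deltaD hrn.le j0 a)
      have h7 : AblockDetUnit hrn.le (ParAux.deltaD hrn.le j0 a).1
          (ParAux.deltaD hrn.le j0 a).2 = 1 := ParAux.detA_deltaD hrn.le j0 a
      have h8 : DblockDetUnit hrn.le (ParAux.deltaD hrn.le j0 a).1
          (ParAux.deltaD hrn.le j0 a).2 = a := ParAux.detD_deltaD hrn.le j0 a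
      rw [h7, h8] at h6
      have h6' : lam (ParAux.deltaD hrn.le j0 a) = m₁ 1 + m₂ a := h6
      rw [hm₁1, zero_add] at h6'
      exact h6'.symm
    exact Prod.ext e₁ e₂
end

section
/- For continuous group homomorphisms λ, μ : F^× → N, the assignment sending a pair ((Φ₁,k), (Φ₂,k)) to (Φ₁+Φ₂, k) induces a well-defined GL_n(F)-equivariant group isomorphism from the Baer sum of E(λ) and E(μ) — namely the subgroup of E(λ) × E(μ) consisting of pairs whose two components have the same degree k, modulo the antidiagonally embedded copy {(class of (Φ,0), class of (−Φ,0))} of v_r(N) — onto E(λ+μ), and this isomorphism commutes with the degree maps to ℤ and with the inclusions of v_r(N). -/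
open Matrix

set_option linter.unusedSectionVars false
section EDefs

variable (F : Type*) [NontriviallyNormedField F] [IsUltrametricDist F]
  [CompleteSpace F] [LocallyCompactSpace F] (n r : ℕ) (hrn : r ≤ n)
  (N : Type*) [AddCommGroup N] [TopologicalSpace N] [IsTopologicalAddGroup N]

/-- The group `Ẽ(λ)` of pairs `(Φ, k)` with `Φ : GL_n(F) → N` continuous satisfying
`Φ(g·p) = Φ(g) + k·λ(det A_p)` for all `g ∈ GL_n(F)` and `p ∈ P`. -/
def Etilde (lam : Fˣ → N) : AddSubgroup ((GL (Fin n) F → N) × ℤ) where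
  carrier := {q | Continuous q.1 ∧ ∀ (g p : GL (Fin n) F) (hp : p ∈ Parabolic F n r),
      q.1 (g * p) = q.1 g + q.2 • lam (AblockDetUnit hrn p hp)}
  add_mem' := by
    rintro a b ⟨hac, ha⟩ ⟨hbc, hb⟩
    refine ⟨hac.add hbc, fun g p hp => ?_⟩
    show a.1 (g * p) + b.1 (g * p) = (a.1 g + b.1 g) + (a.2 + b.2) • lam _
    rw [ha g p hp, hb g p hp, add_zsmul]
    abel
  zero_mem' := by
    refine ⟨continuous_const, fun g p hp => ?_⟩
    show (0 : N) = 0 + (0 : ℤ) • lam _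
    simp
  neg_mem' := by
    rintro a ⟨hac, ha⟩
    refine ⟨hac.neg, fun g p hp => ?_⟩
    show -a.1 (g * p) = -a.1 g + (-a.2) • lam _
    rw [ha g p hp, neg_zsmul]
    abel

/-- The subgroup of `Ẽ(λ)` of pairs `(Φ, 0)` with `Φ` constant. -/
def EtildeConsts (lam : Fˣ → N) : AddSubgroup ↥(Etilde F n r hrn N lam) where
  carrier := {q | q.1.2 = 0 ∧ ∃ c : N, ∀ g : GL (Fin n) F, q.1.1 g = c}
  add_mem' := by
    rintro a b ⟨ha0, c, hc⟩ ⟨hb0, d, hd⟩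
    refine ⟨?_, c + d, fun g => ?_⟩
    · show a.1.2 + b.1.2 = 0
      rw [ha0, hb0]; rfl
    · show a.1.1 g + b.1.1 g = c + d
      rw [hc g, hd g]
  zero_mem' := ⟨rfl, 0, fun g => rfl⟩
  neg_mem' := by
    rintro a ⟨ha0, c, hc⟩
    refine ⟨?_, -c, fun g => ?_⟩
    · show -a.1.2 = 0
      rw [ha0]; rfl
    · show -a.1.1 g = -c
      rw [hc g]

/-- The extension `E(λ)`: the quotient of `Ẽ(λ)` by the constant functions of degree `0`. -/
abbrev Esp (lam : Fˣ → N) :=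
  ↥(Etilde F n r hrn N lam) ⧸ EtildeConsts F n r hrn N lam

/-- The degree map `E(λ) → ℤ`, `(Φ, k) ↦ k`. -/
def Edeg (lam : Fˣ → N) : Esp F n r hrn N lam →+ ℤ :=
  QuotientAddGroup.lift _
    ((AddMonoidHom.snd (GL (Fin n) F → N) ℤ).comp (Etilde F n r hrn N lam).subtype)
    (by rintro q ⟨h0, -⟩; exact h0)

@[simp] lemma Edeg_mk (lam : Fˣ → N) (q : ↥(Etilde F n r hrn N lam)) :
    Edeg F n r hrn N lam (QuotientAddGroup.mk q) = q.1.2 := rfl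

/-- The group of continuous right-`P`-invariant functions `GL_n(F) → N`; modulo constants
this is the generalized Steinberg representation `v_r(N)`. -/
def SteinbergFns : AddSubgroup (GL (Fin n) F → N) where
  carrier := {Φ | Continuous Φ ∧ ∀ (g p : GL (Fin n) F), p ∈ Parabolic F n r → Φ (g * p) = Φ g}
  add_mem' := by
    rintro a b ⟨hac, ha⟩ ⟨hbc, hb⟩
    exact ⟨hac.add hbc, fun g p hp => by
      show a (g * p) + b (g * p) = a g + b g
      rw [ha g p hp, hb g p hp]⟩
  zero_mem' := ⟨continuous_const, fun _ _ _ => rfl⟩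
  neg_mem' := by
    rintro a ⟨hac, ha⟩
    exact ⟨hac.neg, fun g p hp => by
      show -a (g * p) = -a g
      rw [ha g p hp]⟩

/-- `v_r(N)`-vectors, included into `Ẽ(λ)` as the pairs `(Φ, 0)`. -/
def stIncl (lam : Fˣ → N) : ↥(SteinbergFns F n r N) →+ ↥(Etilde F n r hrn N lam) where
  toFun := fun Φ => ⟨(Φ.1, 0), Φ.2.1, fun g p hp => by
    show Φ.1 (g * p) = Φ.1 g + (0 : ℤ) • lam _
    rw [Φ.2.2 g p hp]; simp⟩
  map_zero' := rfl
  map_add' := fun a b => by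
    apply Subtype.ext
    apply Prod.ext rfl
    show (0 : ℤ) = 0 + 0
    simp

/-- The inclusion of `v_r(N)` into `E(λ)` as the classes of pairs `(Φ, 0)`. -/
def stHom (lam : Fˣ → N) : ↥(SteinbergFns F n r N) →+ Esp F n r hrn N lam :=
  (QuotientAddGroup.mk' (EtildeConsts F n r hrn N lam)).comp (stIncl F n r hrn N lam)

@[simp] lemma Edeg_stHom (lam : Fˣ → N) (v : ↥(SteinbergFns F n r N)) :
    Edeg F n r hrn N lam (stHom F n r hrn N lam v) = 0 := rfl

/-- Left translation on `Ẽ(λ)` by an element of `GL_n(F)`. -/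
def EtransAux (lam : Fˣ → N) (h : GL (Fin n) F) :
    ↥(Etilde F n r hrn N lam) →+ ↥(Etilde F n r hrn N lam) where
  toFun := fun q => ⟨(fun g => q.1.1 (h⁻¹ * g), q.1.2),
    q.2.1.comp ((continuous_mul_left h⁻¹)),
    fun g p hp => by
      show q.1.1 (h⁻¹ * (g * p)) = q.1.1 (h⁻¹ * g) + q.1.2 • lam _
      rw [← mul_assoc]
      exact q.2.2 (h⁻¹ * g) p hp⟩
  map_zero' := rfl
  map_add' := fun a b => rfl

/-- The `GL_n(F)`-action on `E(λ)` by left translation, `(h • Φ)(g) = Φ(h⁻¹ g)`. -/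
def Etrans (lam : Fˣ → N) (h : GL (Fin n) F) :
    Esp F n r hrn N lam →+ Esp F n r hrn N lam :=
  QuotientAddGroup.map _ _ (EtransAux F n r hrn N lam h) (by
    rintro q ⟨h0, c, hc⟩
    exact ⟨h0, c, fun g => hc _⟩)

@[simp] lemma Etrans_mk (lam : Fˣ → N) (h : GL (Fin n) F) (q : ↥(Etilde F n r hrn N lam)) :
    Etrans F n r hrn N lam h (QuotientAddGroup.mk q)
      = QuotientAddGroup.mk (EtransAux F n r hrn N lam h q) := rfl

lemma mem_Etilde_add (lam mu : Fˣ → N) {P1 P2 : GL (Fin n) F → N} {k : ℤ}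
    (h1 : (P1, k) ∈ Etilde F n r hrn N lam) (h2 : (P2, k) ∈ Etilde F n r hrn N mu) :
    (P1 + P2, k) ∈ Etilde F n r hrn N (lam + mu) := by
  refine ⟨h1.1.add h2.1, fun g p hp => ?_⟩
  show P1 (g * p) + P2 (g * p)
    = (P1 g + P2 g) + k • (lam (AblockDetUnit hrn p hp) + mu (AblockDetUnit hrn p hp))
  have e1 : P1 (g * p) = P1 g + k • lam (AblockDetUnit hrn p hp) := h1.2 g p hp
  have e2 : P2 (g * p) = P2 g + k • mu (AblockDetUnit hrn p hp) := h2.2 g p hp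
  rw [e1, e2, smul_add]
  abel

/-- The pullback of `E(λ) × E(μ)` along the degree maps: pairs of equal degree. -/
def BaerPull (lam mu : Fˣ → N) :
    AddSubgroup (Esp F n r hrn N lam × Esp F n r hrn N mu) where
  carrier := {x | Edeg F n r hrn N lam x.1 = Edeg F n r hrn N mu x.2}
  add_mem' := by
    intro a b ha hb
    show Edeg F n r hrn N lam (a.1 + b.1) = Edeg F n r hrn N mu (a.2 + b.2)
    rw [map_add, map_add, ha, hb]
  zero_mem' := by
    show Edeg F n r hrn N lam 0 = Edeg F n r hrn N mu 0
    rw [map_zero, map_zero]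
  neg_mem' := by
    intro a ha
    show Edeg F n r hrn N lam (-a.1) = Edeg F n r hrn N mu (-a.2)
    rw [map_neg, map_neg, ha]

lemma mk_mem_BaerPull (lam mu : Fˣ → N) {P1 P2 : GL (Fin n) F → N} {k : ℤ}
    (h1 : (P1, k) ∈ Etilde F n r hrn N lam) (h2 : (P2, k) ∈ Etilde F n r hrn N mu) :
    ((QuotientAddGroup.mk ⟨(P1, k), h1⟩ : Esp F n r hrn N lam),
      (QuotientAddGroup.mk ⟨(P2, k), h2⟩ : Esp F n r hrn N mu))
      ∈ BaerPull F n r hrn N lam mu := rfl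

/-- The antidiagonally embedded copy of `v_r(N)` in the pullback. -/
def BaerAnti (lam mu : Fˣ → N) : AddSubgroup ↥(BaerPull F n r hrn N lam mu) where
  carrier := {x | ∃ v : ↥(SteinbergFns F n r N),
    x.1 = (stHom F n r hrn N lam v, - stHom F n r hrn N mu v)}
  add_mem' := by
    rintro a b ⟨v, hv⟩ ⟨w, hw⟩
    refine ⟨v + w, ?_⟩
    show a.1 + b.1 = _
    rw [hv, hw, map_add, map_add, Prod.mk_add_mk, neg_add]
  zero_mem' := ⟨0, by simp [Prod.ext_iff]⟩
  neg_mem' := by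
    rintro a ⟨v, hv⟩
    refine ⟨-v, ?_⟩
    show -a.1 = _
    rw [hv, map_neg, map_neg, neg_neg, Prod.neg_mk, neg_neg]

/-- The Baer sum of the extensions `E(λ)` and `E(μ)`: the pullback along the degree maps
modulo the antidiagonal copy of `v_r(N)`. -/
abbrev BaerSum (lam mu : Fˣ → N) :=
  ↥(BaerPull F n r hrn N lam mu) ⧸ BaerAnti F n r hrn N lam mu

/-- Translation on `Steinberg` functions. -/
def stTrans (h : GL (Fin n) F) : ↥(SteinbergFns F n r N) →+ ↥(SteinbergFns F n r N) where
  toFun := fun Q => ⟨fun g => Q.1 (h⁻¹ * g), Q.2.1.comp (continuous_mul_left h⁻¹),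
    fun g p hp => by
      show Q.1 (h⁻¹ * (g * p)) = Q.1 (h⁻¹ * g)
      rw [← mul_assoc]
      exact Q.2.2 (h⁻¹ * g) p hp⟩
  map_zero' := rfl
  map_add' := fun a b => rfl

lemma Etrans_stHom (lam : Fˣ → N) (h : GL (Fin n) F) (v : ↥(SteinbergFns F n r N)) :
    Etrans F n r hrn N lam h (stHom F n r hrn N lam v)
      = stHom F n r hrn N lam (stTrans F n r N h v) := rfl

@[simp] lemma Edeg_Etrans (lam : Fˣ → N) (h : GL (Fin n) F) (x : Esp F n r hrn N lam) :
    Edeg F n r hrn N lam (Etrans F n r hrn N lam h x) = Edeg F n r hrn N lam x := by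
  induction x using QuotientAddGroup.induction_on with
  | _ q => rfl

/-- Diagonal translation on the pullback. -/
def BaerTransAux (lam mu : Fˣ → N) (h : GL (Fin n) F) :
    ↥(BaerPull F n r hrn N lam mu) →+ ↥(BaerPull F n r hrn N lam mu) where
  toFun := fun x => ⟨(Etrans F n r hrn N lam h x.1.1, Etrans F n r hrn N mu h x.1.2), by
    show Edeg F n r hrn N lam (Etrans F n r hrn N lam h x.1.1)
      = Edeg F n r hrn N mu (Etrans F n r hrn N mu h x.1.2)
    rw [Edeg_Etrans, Edeg_Etrans]
    exact x.2⟩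
  map_zero' := by
    apply Subtype.ext
    show (Etrans F n r hrn N lam h 0, Etrans F n r hrn N mu h 0) = (0, 0)
    rw [map_zero, map_zero]
  map_add' := fun a b => by
    apply Subtype.ext
    show (Etrans F n r hrn N lam h (a.1.1 + b.1.1), Etrans F n r hrn N mu h (a.1.2 + b.1.2)) = _
    rw [map_add, map_add]
    rfl

/-- The `GL_n(F)`-action on the Baer sum by simultaneous left translation. -/
def BaerTrans (lam mu : Fˣ → N) (h : GL (Fin n) F) :
    BaerSum F n r hrn N lam mu →+ BaerSum F n r hrn N lam mu :=
  QuotientAddGroup.map _ _ (BaerTransAux F n r hrn N lam mu h) (by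
    rintro x ⟨v, hv⟩
    refine ⟨stTrans F n r N h v, ?_⟩
    show (Etrans F n r hrn N lam h x.1.1, Etrans F n r hrn N mu h x.1.2) = _
    rw [hv]
    show (Etrans F n r hrn N lam h (stHom F n r hrn N lam v),
      Etrans F n r hrn N mu h (- stHom F n r hrn N mu v)) = _
    rw [map_neg, Etrans_stHom, Etrans_stHom])

/-- The degree map on the Baer sum. -/
def BaerDeg (lam mu : Fˣ → N) : BaerSum F n r hrn N lam mu →+ ℤ :=
  QuotientAddGroup.lift _
    ((Edeg F n r hrn N lam).comp ((AddMonoidHom.fst _ _).comp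
      (BaerPull F n r hrn N lam mu).subtype))
    (by
      rintro x ⟨v, hv⟩
      show Edeg F n r hrn N lam x.1.1 = 0
      rw [hv]
      exact Edeg_stHom F n r hrn N lam v)

/-- The inclusion of `v_r(N)` into the pullback, via the first factor. -/
def BaerStAux (lam mu : Fˣ → N) :
    ↥(SteinbergFns F n r N) →+ ↥(BaerPull F n r hrn N lam mu) where
  toFun := fun v => ⟨(stHom F n r hrn N lam v, 0), by
    show Edeg F n r hrn N lam (stHom F n r hrn N lam v) = Edeg F n r hrn N mu 0
    rw [Edeg_stHom, map_zero]⟩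
  map_zero' := by
    apply Subtype.ext
    show (stHom F n r hrn N lam 0, (0 : Esp F n r hrn N mu)) = (0, 0)
    rw [map_zero]
  map_add' := fun a b => by
    apply Subtype.ext
    show (stHom F n r hrn N lam (a + b), (0 : Esp F n r hrn N mu)) = _
    rw [map_add]
    show _ = (stHom F n r hrn N lam a + stHom F n r hrn N lam b, 0 + 0)
    rw [add_zero]

/-- The inclusion of `v_r(N)` into the Baer sum. -/
def BaerSt (lam mu : Fˣ → N) : ↥(SteinbergFns F n r N) →+ BaerSum F n r hrn N lam mu :=
  (QuotientAddGroup.mk' _).comp (BaerStAux F n r hrn N lam mu)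

end EDefs

/-! ### Auxiliary: minors of the first `r` columns -/

section BSMinor

variable {F : Type*} [Field F] {n r : ℕ}

/-- The `r × r` minor of `g` with rows `ρ` and columns the first `r` standard columns. -/
def bsMinor (hrn : r ≤ n) (ρ : Fin r → Fin n) (g : GL (Fin n) F) : F :=
  ((g : Matrix (Fin n) (Fin n) F).submatrix ρ (Fin.castLE hrn)).det

lemma blockEquiv_inl (hrn : r ≤ n) (j : Fin r) :
    blockEquiv n r hrn (Sum.inl j) = Fin.castLE hrn j := by
  apply Fin.ext
  simp [blockEquiv]

lemma blockEquiv_inr_val (hrn : r ≤ n) (j : Fin (n - r)) :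
    ((blockEquiv n r hrn (Sum.inr j)) : ℕ) = r + j := by
  simp [blockEquiv]

lemma Ablock_apply (hrn : r ≤ n) (p : GL (Fin n) F) (k j : Fin r) :
    Ablock r hrn p k j
      = (p : Matrix (Fin n) (Fin n) F) (Fin.castLE hrn k) (Fin.castLE hrn j) := by
  show (p : Matrix (Fin n) (Fin n) F)
      (blockEquiv n r hrn (Sum.inl k)) (blockEquiv n r hrn (Sum.inl j)) = _
  rw [blockEquiv_inl, blockEquiv_inl]

lemma bsMinor_mul (hrn : r ≤ n) (ρ : Fin r → Fin n) (g p : GL (Fin n) F)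
    (hp : p ∈ Parabolic F n r) :
    bsMinor hrn ρ (g * p) = bsMinor hrn ρ g * (Ablock r hrn p).det := by
  rw [bsMinor, bsMinor, ← Matrix.det_mul]
  congr 1
  ext i j
  rw [Matrix.mul_apply, Matrix.submatrix_apply, Units.val_mul, Matrix.mul_apply]
  rw [← Fintype.sum_equiv (blockEquiv n r hrn)
    (fun k => (g : Matrix (Fin n) (Fin n) F) (ρ i) (blockEquiv n r hrn k)
      * (p : Matrix (Fin n) (Fin n) F) (blockEquiv n r hrn k) (Fin.castLE hrn j))
    (fun k => (g : Matrix (Fin n) (Fin n) F) (ρ i)  k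
      * (p : Matrix (Fin n) (Fin n) F) k (Fin.castLE hrn j))
    (fun k => rfl)]
  rw [Fintype.sum_sum_type]
  have hzero : ∀ k : Fin (n - r),
      (p : Matrix (Fin n) (Fin n) F) (blockEquiv n r hrn (Sum.inr k)) (Fin.castLE hrn j) = 0 := by
    intro k
    apply hp
    · rw [blockEquiv_inr_val]; omega
    · exact j.isLt
  have h2 : ∑ k : Fin (n - r),
      (g : Matrix (Fin n) (Fin n) F) (ρ i) (blockEquiv n r hrn (Sum.inr k))
        * (p : Matrix (Fin n) (Fin n) F) (blockEquiv n r hrn (Sum.inr k)) (Fin.castLE hrn j)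
      = 0 := Finset.sum_eq_zero fun k _ => by rw [hzero k, mul_zero]
  rw [h2, add_zero]
  apply Finset.sum_congr rfl
  intro k _
  rw [blockEquiv_inl, Matrix.submatrix_apply, Ablock_apply]

lemma bsMinor_exists (hrn : r ≤ n) (g : GL (Fin n) F) :
    ∃ ρ : Fin r → Fin n, bsMinor hrn ρ g ≠ 0 := by
  classical
  set B : Matrix (Fin n) (Fin r) F :=
    (g : Matrix (Fin n) (Fin n) F).submatrix id (Fin.castLE hrn) with hB
  have hspan : Submodule.span F (Set.range fun i => B i) = ⊤ := by
    rw [eq_top_iff]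
    rintro y -
    have hsurj : Function.Surjective ((g : Matrix (Fin n) (Fin n) F).vecMul) :=
      Matrix.vecMul_surjective_iff_isUnit.mpr ⟨g, rfl⟩
    obtain ⟨c, hc⟩ := hsurj (fun j : Fin n => if h : (j : ℕ) < r then y ⟨j, h⟩ else 0)
    rw [Submodule.mem_span_range_iff_exists_fun]
    refine ⟨c, funext fun j => ?_⟩
    have hcj := congrFun hc (Fin.castLE hrn j)
    simp only [Matrix.vecMul, dotProduct] at hcj
    have hj : ((Fin.castLE hrn j : Fin n) : ℕ) < r := j.isLt
    rw [dif_pos hj] at hcj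
    simp only [Finset.sum_apply, Pi.smul_apply, smul_eq_mul]
    rw [show (⟨((Fin.castLE hrn j : Fin n) : ℕ), hj⟩ : Fin r) = j from Fin.ext rfl] at hcj
    exact hcj
  obtain ⟨b, hb1, hb2, hb3⟩ := exists_linearIndependent F (Set.range fun i => B i)
  rw [hspan] at hb2
  haveI : Fintype b := hb3.setFinite.fintype
  let bas : Module.Basis b F (Fin r → F) :=
    Module.Basis.mk hb3 (by rw [Subtype.range_coe]; exact hb2.ge)
  have hcard : Fintype.card b = r := by
    have h1 := Module.finrank_eq_card_basis bas
    rw [Module.finrank_fin_fun] at h1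
    omega
  let e : Fin r ≃ b := (Fintype.equivFinOfCardEq hcard).symm
  have hmem : ∀ j : Fin r, ((e j : Fin r → F)) ∈ Set.range fun i => B i :=
    fun j => hb1 (e j).2
  choose ρ hρ using hmem
  refine ⟨ρ, ?_⟩
  have hrows : LinearIndependent F fun j : Fin r => B (ρ j) := by
    have hfe : (fun j : Fin r => B (ρ j)) = fun j => ((e j : Fin r → F)) :=
      funext fun j => hρ j
    rw [hfe]
    exact hb3.comp e e.injective
  have hM : IsUnit ((g : Matrix (Fin n) (Fin n) F).submatrix ρ (Fin.castLE hrn)) :=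
    Matrix.linearIndependent_rows_iff_isUnit.mp hrows
  exact ((Matrix.isUnit_iff_isUnit_det _).mp hM).ne_zero

end BSMinor

/-! ### Auxiliary: the degree-one element of `Ẽ(λ)` -/

section BSPhi

variable {F : Type*} [NontriviallyNormedField F] [IsUltrametricDist F] {n r : ℕ}

lemma bsNe (hlt : r < n) : (Finset.univ : Finset (Fin r → Fin n)).Nonempty :=
  ⟨fun _ => ⟨0, Nat.lt_of_le_of_lt (Nat.zero_le r) hlt⟩, Finset.mem_univ _⟩

/-- Maximum of the norms of the minors of the first `r` columns. -/
noncomputable def bsMaxv (hlt : r < n) (g : GL (Fin n) F) : ℝ :=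
  Finset.univ.sup' (bsNe hlt) fun ρ : Fin r → Fin n => ‖bsMinor hlt.le ρ g‖

lemma bsMaxv_pos (hlt : r < n) (g : GL (Fin n) F) : 0 < bsMaxv hlt g := by
  obtain ⟨ρ, hρ⟩ := bsMinor_exists hlt.le g
  exact lt_of_lt_of_le (norm_pos_iff.mpr hρ)
    (Finset.le_sup' (fun ρ : Fin r → Fin n => ‖bsMinor hlt.le ρ g‖) (Finset.mem_univ ρ))

open Classical in
/-- The set of maximizing minors. -/
noncomputable def bsSelSet (hlt : r < n) (g : GL (Fin n) F) : Finset (Fin r → Fin n) :=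
  Finset.univ.filter fun ρ => ‖bsMinor hlt.le ρ g‖ = bsMaxv hlt g

lemma bsSelSet_nonempty (hlt : r < n) (g : GL (Fin n) F) : (bsSelSet hlt g).Nonempty := by
  obtain ⟨ρ, -, hval⟩ := Finset.exists_mem_eq_sup' (bsNe hlt)
    (fun ρ : Fin r → Fin n => ‖bsMinor hlt.le ρ g‖)
  refine ⟨ρ, ?_⟩
  simp only [bsSelSet, Finset.mem_filter, Finset.mem_univ, true_and]
  exact hval.symm

/-- A canonical choice of maximizing minor. -/
noncomputable def bsSel (hlt : r < n) (g : GL (Fin n) F) : Fin r → Fin n :=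
  (Fintype.equivFin (Fin r → Fin n)).symm
    (((bsSelSet hlt g).image (Fintype.equivFin (Fin r → Fin n))).min'
      ((bsSelSet_nonempty hlt g).image _))

lemma bsSel_mem (hlt : r < n) (g : GL (Fin n) F) : bsSel hlt g ∈ bsSelSet hlt g := by
  have h := Finset.min'_mem ((bsSelSet hlt g).image (Fintype.equivFin (Fin r → Fin n)))
    ((bsSelSet_nonempty hlt g).image _)
  rw [Finset.mem_image] at h
  obtain ⟨ρ, hρ, hval⟩ := h
  unfold bsSel
  rw [← hval, Equiv.symm_apply_apply]
  exact hρ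

lemma bsSel_norm (hlt : r < n) (g : GL (Fin n) F) :
    ‖bsMinor hlt.le (bsSel hlt g) g‖ = bsMaxv hlt g := by
  have h := bsSel_mem hlt g
  simp only [bsSelSet, Finset.mem_filter, Finset.mem_univ, true_and] at h
  exact h

lemma bsSel_ne (hlt : r < n) (g : GL (Fin n) F) :
    bsMinor hlt.le (bsSel hlt g) g ≠ 0 := by
  intro h0
  have h := bsSel_norm hlt g
  rw [h0, norm_zero] at h
  exact (bsMaxv_pos hlt g).ne h

lemma det_Ablock_ne (hrn : r ≤ n) {p : GL (Fin n) F} (hp : p ∈ Parabolic F n r) :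
    (Ablock r hrn p).det ≠ 0 :=
  ((isUnit_det_blocks hrn hp).1).ne_zero

lemma bs_min'_congr {α : Type*} [LinearOrder α] {s t : Finset α} (h : s = t)
    (hs : s.Nonempty) (ht : t.Nonempty) : s.min' hs = t.min' ht := by
  subst h; rfl

lemma bsMaxv_mul (hlt : r < n) (g p : GL (Fin n) F) (hp : p ∈ Parabolic F n r) :
    bsMaxv hlt (g * p) = bsMaxv hlt g * ‖(Ablock r hlt.le p).det‖ := by
  have h2 : (Finset.univ.sup' (bsNe hlt) fun ρ : Fin r → Fin n => ‖bsMinor hlt.le ρ g‖)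
        * ‖(Ablock r hlt.le p).det‖
      = Finset.univ.sup' (bsNe hlt)
        fun ρ : Fin r → Fin n => ‖bsMinor hlt.le ρ g‖ * ‖(Ablock r hlt.le p).det‖ :=
    Finset.comp_sup'_eq_sup'_comp (bsNe hlt) (fun x : ℝ => x * ‖(Ablock r hlt.le p).det‖)
      (fun a b => max_mul_of_nonneg a b (norm_nonneg _))
  rw [bsMaxv, bsMaxv, h2]
  apply Finset.sup'_congr (bsNe hlt) rfl
  intro ρ _
  rw [bsMinor_mul hlt.le ρ g p hp, norm_mul]

lemma bsSelSet_mul (hlt : r < n) (g p : GL (Fin n) F) (hp : p ∈ Parabolic F n r) :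
    bsSelSet hlt (g * p) = bsSelSet hlt g := by
  ext ρ
  simp only [bsSelSet, Finset.mem_filter, Finset.mem_univ, true_and]
  rw [bsMinor_mul hlt.le ρ g p hp, norm_mul, bsMaxv_mul hlt g p hp]
  exact mul_left_inj' (norm_ne_zero_iff.mpr (det_Ablock_ne hlt.le hp))

lemma bsSel_mul (hlt : r < n) (g p : GL (Fin n) F) (hp : p ∈ Parabolic F n r) :
    bsSel hlt (g * p) = bsSel hlt g := by
  unfold bsSel
  exact congrArg _ (bs_min'_congr (congrArg _ (bsSelSet_mul hlt g p hp)) _ _)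

open Classical in
/-- Map a field element to a unit (junk value `1` at `0`). -/
noncomputable def bsToUnits {F : Type*} [Field F] (x : F) : Fˣ :=
  if h : x = 0 then 1 else Units.mk0 x h

lemma bsToUnits_mul {x y : F} (hx : x ≠ 0) (hy : y ≠ 0) :
    bsToUnits (x * y) = bsToUnits x * bsToUnits y := by
  apply Units.ext
  simp [bsToUnits, dif_neg hx, dif_neg hy, dif_neg (mul_ne_zero hx hy)]

lemma continuousAt_bsToUnits {x₀ : F} (h : x₀ ≠ 0) :
    ContinuousAt (bsToUnits (F := F)) x₀ := by
  rw [Units.isInducing_embedProduct.continuousAt_iff]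
  have hev : (fun x : F => ((x, MulOpposite.op x⁻¹) : F × Fᵐᵒᵖ))
      =ᶠ[nhds x₀] (Units.embedProduct F ∘ bsToUnits) := by
    filter_upwards [isOpen_ne.mem_nhds h] with x hx
    simp [bsToUnits, dif_neg hx, Units.embedProduct]
  have hc : ContinuousAt (fun x : F => ((x, MulOpposite.op x⁻¹) : F × Fᵐᵒᵖ)) x₀ :=
    continuousAt_id.prodMk ((MulOpposite.continuous_op.continuousAt).comp (continuousAt_inv₀ h))
  exact hc.congr hev

/-- The canonical degree-one cocycle `GL_n(F) → F^×`. -/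
noncomputable def bsPhi0 (hlt : r < n) (g : GL (Fin n) F) : Fˣ :=
  bsToUnits (bsMinor hlt.le (bsSel hlt g) g)

lemma bsToUnits_AblockDetUnit (hrn : r ≤ n) {p : GL (Fin n) F} (hp : p ∈ Parabolic F n r) :
    bsToUnits ((Ablock r hrn p).det) = AblockDetUnit hrn p hp := by
  apply Units.ext
  rw [show ((AblockDetUnit hrn p hp : Fˣ) : F) = (Ablock r hrn p).det from
    (isUnit_det_blocks hrn hp).1.unit_spec]
  simp [bsToUnits, dif_neg (det_Ablock_ne hrn hp)]

lemma bsPhi0_mul (hlt : r < n) (g p : GL (Fin n) F) (hp : p ∈ Parabolic F n r) :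
    bsPhi0 hlt (g * p) = bsPhi0 hlt g * AblockDetUnit hlt.le p hp := by
  unfold bsPhi0
  rw [bsSel_mul hlt g p hp, bsMinor_mul hlt.le _ g p hp,
    bsToUnits_mul (bsSel_ne hlt g) (det_Ablock_ne hlt.le hp),
    bsToUnits_AblockDetUnit hlt.le hp]

lemma bsMinor_continuous (hrn : r ≤ n) (ρ : Fin r → Fin n) :
    Continuous fun g : GL (Fin n) F => bsMinor hrn ρ g :=
  ((Units.continuous_val).matrix_submatrix ρ (Fin.castLE hrn)).matrix_det

open Classical in
lemma bsSel_eq_of_close (hlt : r < n) (g₀ g : GL (Fin n) F)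
    (hg : ∀ ρ : Fin r → Fin n, ‖bsMinor hlt.le ρ g - bsMinor hlt.le ρ g₀‖ <
      Finset.univ.inf' (bsNe hlt) (fun ρ : Fin r → Fin n =>
        if bsMinor hlt.le ρ g₀ = 0 then bsMaxv hlt g₀ else ‖bsMinor hlt.le ρ g₀‖)) :
    bsSel hlt g = bsSel hlt g₀ := by
  set ε : ℝ := Finset.univ.inf' (bsNe hlt) (fun ρ : Fin r → Fin n =>
    if bsMinor hlt.le ρ g₀ = 0 then bsMaxv hlt g₀ else ‖bsMinor hlt.le ρ g₀‖) with hεdef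
  have ha : ∀ ρ : Fin r → Fin n, bsMinor hlt.le ρ g₀ ≠ 0 →
      ‖bsMinor hlt.le ρ g‖ = ‖bsMinor hlt.le ρ g₀‖ := by
    intro ρ h0
    have hle : ε ≤ ‖bsMinor hlt.le ρ g₀‖ := by
      have h1 := Finset.inf'_le (fun ρ : Fin r → Fin n =>
        if bsMinor hlt.le ρ g₀ = 0 then bsMaxv hlt g₀ else ‖bsMinor hlt.le ρ g₀‖)
        (Finset.mem_univ ρ)
      rw [if_neg h0] at h1
      exact h1
    have h1 : ‖bsMinor hlt.le ρ g - bsMinor hlt.le ρ g₀‖ < ‖bsMinor hlt.le ρ g₀‖ :=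
      lt_of_lt_of_le (hg ρ) hle
    have h2 : ‖(bsMinor hlt.le ρ g - bsMinor hlt.le ρ g₀) + bsMinor hlt.le ρ g₀‖
        = max ‖bsMinor hlt.le ρ g - bsMinor hlt.le ρ g₀‖ ‖bsMinor hlt.le ρ g₀‖ :=
      IsUltrametricDist.norm_add_eq_max_of_norm_ne_norm (ne_of_lt h1)
    rw [sub_add_cancel] at h2
    rw [h2, max_eq_right h1.le]
  have hb : ∀ ρ : Fin r → Fin n, bsMinor hlt.le ρ g₀ = 0 →
      ‖bsMinor hlt.le ρ g‖ < bsMaxv hlt g₀ := by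
    intro ρ h0
    have hle : ε ≤ bsMaxv hlt g₀ := by
      have h1 := Finset.inf'_le (fun ρ : Fin r → Fin n =>
        if bsMinor hlt.le ρ g₀ = 0 then bsMaxv hlt g₀ else ‖bsMinor hlt.le ρ g₀‖)
        (Finset.mem_univ ρ)
      rw [if_pos h0] at h1
      exact h1
    have h1 : ‖bsMinor hlt.le ρ g‖ = ‖bsMinor hlt.le ρ g - bsMinor hlt.le ρ g₀‖ := by
      rw [h0, sub_zero]
    rw [h1]
    exact lt_of_lt_of_le (hg ρ) hle
  have hmax : bsMaxv hlt g = bsMaxv hlt g₀ := by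
    apply le_antisymm
    · apply Finset.sup'_le
      intro ρ _
      by_cases h0 : bsMinor hlt.le ρ g₀ = 0
      · exact (hb ρ h0).le
      · rw [ha ρ h0]
        exact Finset.le_sup' (fun ρ : Fin r → Fin n => ‖bsMinor hlt.le ρ g₀‖)
          (Finset.mem_univ ρ)
    · rw [← bsSel_norm hlt g₀, ← ha _ (bsSel_ne hlt g₀)]
      exact Finset.le_sup' (fun ρ : Fin r → Fin n => ‖bsMinor hlt.le ρ g‖)
        (Finset.mem_univ _)
  have hset : bsSelSet hlt g = bsSelSet hlt g₀ := by
    ext ρ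
    simp only [bsSelSet, Finset.mem_filter, Finset.mem_univ, true_and]
    rw [hmax]
    by_cases h0 : bsMinor hlt.le ρ g₀ = 0
    · constructor
      · intro hcontr
        exact absurd hcontr (hb ρ h0).ne
      · intro hcontr
        rw [h0, norm_zero] at hcontr
        exact absurd hcontr.symm (bsMaxv_pos hlt g₀).ne'
    · rw [ha ρ h0]
  unfold bsSel
  exact congrArg _ (bs_min'_congr (congrArg _ hset) _ _)

lemma bsPhi0_continuous (hlt : r < n) : Continuous (bsPhi0 (F := F) hlt) := by
  rw [continuous_iff_continuousAt]
  intro g₀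
  classical
  have hεpos : 0 < Finset.univ.inf' (bsNe hlt) (fun ρ : Fin r → Fin n =>
      if bsMinor hlt.le ρ g₀ = 0 then bsMaxv hlt g₀ else ‖bsMinor hlt.le ρ g₀‖) := by
    rw [Finset.lt_inf'_iff]
    intro ρ _
    split
    · exact bsMaxv_pos hlt g₀
    · exact norm_pos_iff.mpr ‹_›
  have hU : ∀ᶠ g in nhds g₀, ∀ ρ : Fin r → Fin n,
      ‖bsMinor hlt.le ρ g - bsMinor hlt.le ρ g₀‖ <
      Finset.univ.inf' (bsNe hlt) (fun ρ : Fin r → Fin n =>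
        if bsMinor hlt.le ρ g₀ = 0 then bsMaxv hlt g₀ else ‖bsMinor hlt.le ρ g₀‖) := by
    rw [Filter.eventually_all]
    intro ρ
    have ht : Filter.Tendsto (fun g => ‖bsMinor hlt.le ρ g - bsMinor hlt.le ρ g₀‖)
        (nhds g₀) (nhds 0) := by
      have hcont : Continuous fun g : GL (Fin n) F =>
          ‖bsMinor hlt.le ρ g - bsMinor hlt.le ρ g₀‖ :=
        ((bsMinor_continuous hlt.le ρ).sub continuous_const).norm
      have h1 : Filter.Tendsto _ (nhds g₀)
          (nhds ‖bsMinor hlt.le ρ g₀ - bsMinor hlt.le ρ g₀‖) := hcont.continuousAt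
      simpa using h1
    exact ht.eventually_lt_const hεpos
  have hev : bsPhi0 hlt =ᶠ[nhds g₀]
      fun g => bsToUnits (bsMinor hlt.le (bsSel hlt g₀) g) := by
    filter_upwards [hU] with g hg
    unfold bsPhi0
    rw [bsSel_eq_of_close hlt g₀ g hg]
  have hc : ContinuousAt (fun g => bsToUnits (bsMinor hlt.le (bsSel hlt g₀) g)) g₀ :=
    (continuousAt_bsToUnits (bsSel_ne hlt g₀)).comp
      (bsMinor_continuous hlt.le (bsSel hlt g₀)).continuousAt
  exact hc.congr hev.symm

end BSPhi

/-! ### Auxiliary: Baer sum machinery -/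

section BSMain

variable (F : Type*) [NontriviallyNormedField F] [IsUltrametricDist F]
  [CompleteSpace F] [LocallyCompactSpace F] (n r : ℕ) (hrn : r ≤ n)
  (N : Type*) [AddCommGroup N] [TopologicalSpace N] [IsTopologicalAddGroup N]
  (lam mu : Fˣ → N)

/-- Pairs in `Ẽ(λ) × Ẽ(μ)` with equal degrees. -/
def bsTP : AddSubgroup (↥(Etilde F n r hrn N lam) × ↥(Etilde F n r hrn N mu)) where
  carrier := {q | q.1.1.2 = q.2.1.2}
  add_mem' := by
    rintro a b (ha : _ = _) (hb : _ = _)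
    show a.1.1.2 + b.1.1.2 = a.2.1.2 + b.2.1.2
    rw [ha, hb]
  zero_mem' := rfl
  neg_mem' := by
    rintro a (ha : _ = _)
    show -a.1.1.2 = -a.2.1.2
    rw [ha]

/-- Addition of the two function components. -/
def bsTPadd : ↥(bsTP F n r hrn N lam mu) →+ ↥(Etilde F n r hrn N (lam + mu)) where
  toFun q := ⟨(q.1.1.1.1 + q.1.2.1.1, q.1.1.1.2), by
    have h1 : (q.1.1.1.1, q.1.1.1.2) ∈ Etilde F n r hrn N lam := q.1.1.2
    have h2 : (q.1.2.1.1, q.1.1.1.2) ∈ Etilde F n r hrn N mu := by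
      have h2' : (q.1.2.1.1, q.1.2.1.2) ∈ Etilde F n r hrn N mu := q.1.2.2
      rw [q.2]
      exact h2'
    exact mem_Etilde_add F n r hrn N lam mu h1 h2⟩
  map_zero' := by
    apply Subtype.ext
    show ((0 : GL (Fin n) F → N) + 0, (0 : ℤ)) = (0, 0)
    simp
  map_add' a b := by
    apply Subtype.ext
    apply Prod.ext
    · show (a.1.1.1.1 + b.1.1.1.1) + (a.1.2.1.1 + b.1.2.1.1)
        = (a.1.1.1.1 + a.1.2.1.1) + (b.1.1.1.1 + b.1.2.1.1)
      abel
    · rfl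

/-- Projection to the Baer pullback. -/
def bsPi : ↥(bsTP F n r hrn N lam mu) →+ ↥(BaerPull F n r hrn N lam mu) where
  toFun q := ⟨(QuotientAddGroup.mk q.1.1, QuotientAddGroup.mk q.1.2), by
    show Edeg F n r hrn N lam (QuotientAddGroup.mk q.1.1)
      = Edeg F n r hrn N mu (QuotientAddGroup.mk q.1.2)
    rw [Edeg_mk, Edeg_mk]
    exact q.2⟩
  map_zero' := rfl
  map_add' a b := by
    apply Subtype.ext
    apply Prod.ext
    · show (QuotientAddGroup.mk (a.1.1 + b.1.1) : Esp F n r hrn N lam) = _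
      rw [QuotientAddGroup.mk_add]
      rfl
    · show (QuotientAddGroup.mk (a.1.2 + b.1.2) : Esp F n r hrn N mu) = _
      rw [QuotientAddGroup.mk_add]
      rfl

lemma bsPi_surjective : Function.Surjective (bsPi F n r hrn N lam mu) := by
  rintro ⟨⟨x1, x2⟩, hx⟩
  obtain ⟨q1, rfl⟩ := QuotientAddGroup.mk_surjective x1
  obtain ⟨q2, rfl⟩ := QuotientAddGroup.mk_surjective x2
  exact ⟨⟨(q1, q2), hx⟩, rfl⟩

/-- The sum map to `E(λ+μ)`. -/
def bsF : ↥(bsTP F n r hrn N lam mu) →+ Esp F n r hrn N (lam + mu) :=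
  (QuotientAddGroup.mk' (EtildeConsts F n r hrn N (lam + mu))).comp
    (bsTPadd F n r hrn N lam mu)

lemma bsF_ker : ∀ q ∈ (bsPi F n r hrn N lam mu).ker, bsF F n r hrn N lam mu q = 0 := by
  intro q hq
  rw [AddMonoidHom.mem_ker] at hq
  have h1 : (QuotientAddGroup.mk q.1.1 : Esp F n r hrn N lam) = 0 :=
    congrArg (fun z : ↥(BaerPull F n r hrn N lam mu) => z.1.1) hq
  have h2 : (QuotientAddGroup.mk q.1.2 : Esp F n r hrn N mu) = 0 :=
    congrArg (fun z : ↥(BaerPull F n r hrn N lam mu) => z.1.2) hq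
  rw [QuotientAddGroup.eq_zero_iff] at h1 h2
  obtain ⟨hk1, c1, hc1⟩ := h1
  obtain ⟨hk2, c2, hc2⟩ := h2
  show (QuotientAddGroup.mk (bsTPadd F n r hrn N lam mu q) : Esp F n r hrn N (lam + mu)) = 0
  rw [QuotientAddGroup.eq_zero_iff]
  refine ⟨hk1, c1 + c2, fun g => ?_⟩
  show q.1.1.1.1 g + q.1.2.1.1 g = c1 + c2
  rw [hc1 g, hc2 g]

/-- The induced map from the Baer pullback to `E(λ+μ)`. -/
noncomputable def bsTheta' : ↥(BaerPull F n r hrn N lam mu) →+ Esp F n r hrn N (lam + mu) :=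
  (QuotientAddGroup.lift (bsPi F n r hrn N lam mu).ker (bsF F n r hrn N lam mu)
    (bsF_ker F n r hrn N lam mu)).comp
  (QuotientAddGroup.quotientKerEquivOfSurjective (bsPi F n r hrn N lam mu)
    (bsPi_surjective F n r hrn N lam mu)).symm.toAddMonoidHom

lemma bsTheta'_pi (q : ↥(bsTP F n r hrn N lam mu)) :
    bsTheta' F n r hrn N lam mu (bsPi F n r hrn N lam mu q) = bsF F n r hrn N lam mu q := by
  have h1 : (QuotientAddGroup.quotientKerEquivOfSurjective (bsPi F n r hrn N lam mu)
      (bsPi_surjective F n r hrn N lam mu)).symm (bsPi F n r hrn N lam mu q)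
      = QuotientAddGroup.mk q := by
    rw [AddEquiv.symm_apply_eq]
    rfl
  show (QuotientAddGroup.lift (bsPi F n r hrn N lam mu).ker (bsF F n r hrn N lam mu)
      (bsF_ker F n r hrn N lam mu))
    ((QuotientAddGroup.quotientKerEquivOfSurjective (bsPi F n r hrn N lam mu)
      (bsPi_surjective F n r hrn N lam mu)).symm (bsPi F n r hrn N lam mu q))
    = bsF F n r hrn N lam mu q
  rw [h1]
  rfl

lemma bsTheta'_anti : ∀ x ∈ BaerAnti F n r hrn N lam mu,
    bsTheta' F n r hrn N lam mu x = 0 := by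
  rintro x ⟨v, hv⟩
  have ht2 : ((stIncl F n r hrn N lam v : ↥(Etilde F n r hrn N lam)),
      (-(stIncl F n r hrn N mu v) : ↥(Etilde F n r hrn N mu))) ∈ bsTP F n r hrn N lam mu := by
    show (0 : ℤ) = -0
    simp
  set t : ↥(bsTP F n r hrn N lam mu) :=
    ⟨(stIncl F n r hrn N lam v, -(stIncl F n r hrn N mu v)), ht2⟩ with htdef
  have hx : bsPi F n r hrn N lam mu t = x := by
    apply Subtype.ext
    rw [hv]
    apply Prod.ext
    · rfl
    · show (QuotientAddGroup.mk (-(stIncl F n r hrn N mu v)) : Esp F n r hrn N mu) = _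
      rw [QuotientAddGroup.mk_neg]
      rfl
  rw [← hx, bsTheta'_pi]
  show (QuotientAddGroup.mk (bsTPadd F n r hrn N lam mu t) : Esp F n r hrn N (lam + mu)) = 0
  rw [QuotientAddGroup.eq_zero_iff]
  refine ⟨rfl, 0, fun g => ?_⟩
  show v.1 g + (-v.1) g = 0
  simp

lemma bsTheta'_ker : ∀ x : ↥(BaerPull F n r hrn N lam mu),
    bsTheta' F n r hrn N lam mu x = 0 → x ∈ BaerAnti F n r hrn N lam mu := by
  intro x hx0
  obtain ⟨t, rfl⟩ := bsPi_surjective F n r hrn N lam mu x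
  rw [bsTheta'_pi] at hx0
  rw [show bsF F n r hrn N lam mu t
    = (QuotientAddGroup.mk (bsTPadd F n r hrn N lam mu t) : Esp F n r hrn N (lam + mu))
    from rfl, QuotientAddGroup.eq_zero_iff] at hx0
  obtain ⟨hk, c, hc⟩ := hx0
  have hk1 : t.1.1.1.2 = 0 := hk
  have hk2 : t.1.2.1.2 = 0 := by rw [← t.2]; exact hk1
  have hvmem : t.1.1.1.1 ∈ SteinbergFns F n r N := by
    refine ⟨t.1.1.2.1, fun g p hp => ?_⟩
    have h1 := t.1.1.2.2 g p hp
    rw [hk1] at h1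
    simpa using h1
  have hc' : ∀ g : GL (Fin n) F, t.1.1.1.1 g + t.1.2.1.1 g = c := hc
  refine ⟨⟨t.1.1.1.1, hvmem⟩, ?_⟩
  have h1 : t.1.1 = stIncl F n r hrn N lam ⟨t.1.1.1.1, hvmem⟩ :=
    Subtype.ext (Prod.ext rfl hk1)
  apply Prod.ext
  · exact congrArg (fun z : ↥(Etilde F n r hrn N lam) =>
      (QuotientAddGroup.mk z : Esp F n r hrn N lam)) h1
  · show (QuotientAddGroup.mk t.1.2 : Esp F n r hrn N mu) = _
    have hmem : (t.1.2 + stIncl F n r hrn N mu ⟨t.1.1.1.1, hvmem⟩)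
        ∈ EtildeConsts F n r hrn N mu := by
      refine ⟨?_, c, fun g => ?_⟩
      · show t.1.2.1.2 + (0 : ℤ) = 0
        rw [hk2, add_zero]
      · show t.1.2.1.1 g + t.1.1.1.1 g = c
        rw [← hc' g]
        abel
    have h0 : (QuotientAddGroup.mk (t.1.2 + stIncl F n r hrn N mu ⟨t.1.1.1.1, hvmem⟩)
        : Esp F n r hrn N mu) = 0 := (QuotientAddGroup.eq_zero_iff _).mpr hmem
    rw [QuotientAddGroup.mk_add] at h0
    exact eq_neg_of_add_eq_zero_left h0

lemma Etilde_sub_mem {Q P : GL (Fin n) F → N} {k : ℤ}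
    (hQ : (Q, k) ∈ Etilde F n r hrn N (lam + mu)) (hP : (P, k) ∈ Etilde F n r hrn N lam) :
    (Q - P, k) ∈ Etilde F n r hrn N mu := by
  refine ⟨hQ.1.sub hP.1, fun g p hp => ?_⟩
  show Q (g * p) - P (g * p) = (Q g - P g) + k • mu (AblockDetUnit hrn p hp)
  have hQ' : Q (g * p) = Q g + k • (lam + mu) (AblockDetUnit hrn p hp) := hQ.2 g p hp
  have hP' : P (g * p) = P g + k • lam (AblockDetUnit hrn p hp) := hP.2 g p hp
  rw [hQ', hP']
  have hsum : (lam + mu) (AblockDetUnit hrn p hp)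
      = lam (AblockDetUnit hrn p hp) + mu (AblockDetUnit hrn p hp) := rfl
  rw [hsum, smul_add]
  abel

end BSMain

section BSMain2

variable (F : Type*) [NontriviallyNormedField F] [IsUltrametricDist F]
  [CompleteSpace F] [LocallyCompactSpace F] (n r : ℕ) (hrn : r ≤ n)
  (N : Type*) [AddCommGroup N] [TopologicalSpace N] [IsTopologicalAddGroup N]
  (lam mu : Fˣ → N)

lemma bsTP_trans_mem (h : GL (Fin n) F) (t : ↥(bsTP F n r hrn N lam mu)) :
    ((EtransAux F n r hrn N lam h t.1.1, EtransAux F n r hrn N mu h t.1.2))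
      ∈ bsTP F n r hrn N lam mu := t.2

lemma bsTheta'_trans (h : GL (Fin n) F) (t : ↥(bsTP F n r hrn N lam mu)) :
    bsTheta' F n r hrn N lam mu
        (BaerTransAux F n r hrn N lam mu h (bsPi F n r hrn N lam mu t))
      = Etrans F n r hrn N (lam + mu) h
        (bsTheta' F n r hrn N lam mu (bsPi F n r hrn N lam mu t)) := by
  have h1 : BaerTransAux F n r hrn N lam mu h (bsPi F n r hrn N lam mu t)
      = bsPi F n r hrn N lam mu
        ⟨(EtransAux F n r hrn N lam h t.1.1, EtransAux F n r hrn N mu h t.1.2),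
          bsTP_trans_mem F n r hrn N lam mu h t⟩ := rfl
  rw [h1, bsTheta'_pi, bsTheta'_pi]
  show (QuotientAddGroup.mk (bsTPadd F n r hrn N lam mu
      ⟨(EtransAux F n r hrn N lam h t.1.1, EtransAux F n r hrn N mu h t.1.2),
        bsTP_trans_mem F n r hrn N lam mu h t⟩) : Esp F n r hrn N (lam + mu))
    = Etrans F n r hrn N (lam + mu) h
      (QuotientAddGroup.mk (bsTPadd F n r hrn N lam mu t))
  rw [Etrans_mk]
  exact congrArg QuotientAddGroup.mk (Subtype.ext rfl)

end BSMain2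
set_option maxHeartbeats 2000000 in

/-- For continuous homomorphisms `λ, μ : F^× → N`, the assignment
`((Φ₁,k), (Φ₂,k)) ↦ (Φ₁+Φ₂, k)` induces a well-defined `GL_n(F)`-equivariant group
isomorphism from the Baer sum of `E(λ)` and `E(μ)` onto `E(λ+μ)`, commuting with the
degree maps to `ℤ` and with the inclusions of `v_r(N)`. -/
theorem baerSum_iso_extension_add
    {F : Type*} [NontriviallyNormedField F] [IsUltrametricDist F]
    [CompleteSpace F] [LocallyCompactSpace F]
    {n r : ℕ} (hn : 2 ≤ n) (hr : 0 < r) (hrlt : r < n)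
    {N : Type*} [AddCommGroup N] [TopologicalSpace N] [IsTopologicalAddGroup N]
    (lam mu : Fˣ → N)
    (hlamc : Continuous lam) (hlam : ∀ a b : Fˣ, lam (a * b) = lam a + lam b)
    (hmuc : Continuous mu) (hmu : ∀ a b : Fˣ, mu (a * b) = mu a + mu b) :
    ∃ θ : BaerSum F n r hrlt.le N lam mu ≃+ Esp F n r hrlt.le N (lam + mu),
      (∀ (P1 P2 : GL (Fin n) F → N) (k : ℤ)
          (h1 : (P1, k) ∈ Etilde F n r hrlt.le N lam)
          (h2 : (P2, k) ∈ Etilde F n r hrlt.le N mu),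
        θ (QuotientAddGroup.mk
            ⟨((QuotientAddGroup.mk ⟨(P1, k), h1⟩ : Esp F n r hrlt.le N lam),
              (QuotientAddGroup.mk ⟨(P2, k), h2⟩ : Esp F n r hrlt.le N mu)),
              mk_mem_BaerPull F n r hrlt.le N lam mu h1 h2⟩)
          = QuotientAddGroup.mk ⟨(P1 + P2, k), mem_Etilde_add F n r hrlt.le N lam mu h1 h2⟩) ∧
      (∀ (h : GL (Fin n) F) (x : BaerSum F n r hrlt.le N lam mu),
        θ (BaerTrans F n r hrlt.le N lam mu h x)
          = Etrans F n r hrlt.le N (lam + mu) h (θ x)) ∧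
      (∀ x : BaerSum F n r hrlt.le N lam mu,
        Edeg F n r hrlt.le N (lam + mu) (θ x) = BaerDeg F n r hrlt.le N lam mu x) ∧
      (∀ v : ↥(SteinbergFns F n r N),
        θ (BaerSt F n r hrlt.le N lam mu v) = stHom F n r hrlt.le N (lam + mu) v) := by
  have hphi1 : ((fun g : GL (Fin n) F => lam (bsPhi0 hrlt g), (1 : ℤ))
      : (GL (Fin n) F → N) × ℤ) ∈ Etilde F n r hrlt.le N lam := by
    refine ⟨hlamc.comp (bsPhi0_continuous hrlt), fun g p hp => ?_⟩
    show lam (bsPhi0 hrlt (g * p))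
      = lam (bsPhi0 hrlt g) + (1 : ℤ) • lam (AblockDetUnit hrlt.le p hp)
    rw [bsPhi0_mul hrlt g p hp, hlam, one_zsmul]
  let θbar : BaerSum F n r hrlt.le N lam mu →+ Esp F n r hrlt.le N (lam + mu) :=
    QuotientAddGroup.lift _ (bsTheta' F n r hrlt.le N lam mu)
      (bsTheta'_anti F n r hrlt.le N lam mu)
  have hbar_mk : ∀ x : ↥(BaerPull F n r hrlt.le N lam mu),
      θbar (QuotientAddGroup.mk x) = bsTheta' F n r hrlt.le N lam mu x := fun x => rfl
  have hinj : Function.Injective θbar := by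
    rw [injective_iff_map_eq_zero]
    intro z hz
    induction z using QuotientAddGroup.induction_on with
    | _ x =>
      rw [hbar_mk] at hz
      rw [QuotientAddGroup.eq_zero_iff]
      exact bsTheta'_ker F n r hrlt.le N lam mu x hz
  have hsurj : Function.Surjective θbar := by
    intro y
    induction y using QuotientAddGroup.induction_on with
    | _ q =>
      have hP1 : ((q.1.2 • fun g : GL (Fin n) F => lam (bsPhi0 hrlt g), q.1.2)
          : (GL (Fin n) F → N) × ℤ) ∈ Etilde F n r hrlt.le N lam := by
        have h1 := (Etilde F n r hrlt.le N lam).zsmul_mem hphi1 q.1.2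
        have h2 : q.1.2 • (((fun g : GL (Fin n) F => lam (bsPhi0 hrlt g)), (1 : ℤ))
            : (GL (Fin n) F → N) × ℤ)
            = ((q.1.2 • fun g : GL (Fin n) F => lam (bsPhi0 hrlt g), q.1.2)
              : (GL (Fin n) F → N) × ℤ) := by
          apply Prod.ext
          · rfl
          · show q.1.2 • (1 : ℤ) = q.1.2
            simp
        rwa [h2] at h1
      have hQ : (q.1.1, q.1.2) ∈ Etilde F n r hrlt.le N (lam + mu) := q.2
      have hP2 := Etilde_sub_mem F n r hrlt.le N lam mu hQ hP1
      set t : ↥(bsTP F n r hrlt.le N lam mu) :=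
        ⟨(⟨_, hP1⟩, ⟨_, hP2⟩), rfl⟩ with htdef
      refine ⟨QuotientAddGroup.mk (bsPi F n r hrlt.le N lam mu t), ?_⟩
      rw [hbar_mk, bsTheta'_pi]
      show (QuotientAddGroup.mk (bsTPadd F n r hrlt.le N lam mu t)
        : Esp F n r hrlt.le N (lam + mu)) = QuotientAddGroup.mk q
      refine congrArg QuotientAddGroup.mk (Subtype.ext (Prod.ext ?_ rfl))
      show (q.1.2 • fun g : GL (Fin n) F => lam (bsPhi0 hrlt g))
        + (q.1.1 - q.1.2 • fun g : GL (Fin n) F => lam (bsPhi0 hrlt g)) = q.1.1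
      abel
  let θ : BaerSum F n r hrlt.le N lam mu ≃+ Esp F n r hrlt.le N (lam + mu) :=
    AddEquiv.ofBijective θbar ⟨hinj, hsurj⟩
  have hθmk : ∀ x : ↥(BaerPull F n r hrlt.le N lam mu),
      θ (QuotientAddGroup.mk x) = bsTheta' F n r hrlt.le N lam mu x := fun x => rfl
  refine ⟨θ, ?_, ?_, ?_, ?_⟩
  · intro P1 P2 k h1 h2
    rw [hθmk]
    have hx : (⟨((QuotientAddGroup.mk ⟨(P1, k), h1⟩ : Esp F n r hrlt.le N lam),
        (QuotientAddGroup.mk ⟨(P2, k), h2⟩ : Esp F n r hrlt.le N mu)),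
        mk_mem_BaerPull F n r hrlt.le N lam mu h1 h2⟩
        : ↥(BaerPull F n r hrlt.le N lam mu))
      = bsPi F n r hrlt.le N lam mu ⟨(⟨(P1, k), h1⟩, ⟨(P2, k), h2⟩), rfl⟩ := Subtype.ext rfl
    rw [hx, bsTheta'_pi]
    rfl
  · intro h x
    induction x using QuotientAddGroup.induction_on with
    | _ b =>
      obtain ⟨t, rfl⟩ := bsPi_surjective F n r hrlt.le N lam mu b
      rw [show (BaerTrans F n r hrlt.le N lam mu h)
          (QuotientAddGroup.mk (bsPi F n r hrlt.le N lam mu t))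
        = QuotientAddGroup.mk
          (BaerTransAux F n r hrlt.le N lam mu h (bsPi F n r hrlt.le N lam mu t)) from rfl]
      rw [hθmk, hθmk]
      exact bsTheta'_trans F n r hrlt.le N lam mu h t
  · intro x
    induction x using QuotientAddGroup.induction_on with
    | _ b =>
      obtain ⟨t, rfl⟩ := bsPi_surjective F n r hrlt.le N lam mu b
      rw [hθmk, bsTheta'_pi]
      rfl
  · intro v
    rw [show BaerSt F n r hrlt.le N lam mu v
      = QuotientAddGroup.mk (bsPi F n r hrlt.le N lam mu
        ⟨(stIncl F n r hrlt.le N lam v, 0), rfl⟩) from rfl]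
    rw [hθmk, bsTheta'_pi]
    exact congrArg QuotientAddGroup.mk
      (Subtype.ext (Prod.ext (funext fun g => add_zero _) rfl))
end

section
/- Let λ : P → N be a continuous group homomorphism. The following are equivalent: (i) there exists a continuous map Φ : GL_n(F) → N such that Φ(g·p) = Φ(g) + λ(p) for all g ∈ GL_n(F) and p ∈ P, and such that for every g ∈ GL_n(F) there exists c(g) ∈ N with Φ(g·g') = c(g) + Φ(g') for all g' ∈ GL_n(F); (ii) λ extends to a continuous group homomorphism GL_n(F) → N. (Condition (i) says that the extension class b_λ of ℤ by v_r(N) determined by λ is split.) -/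
open Matrix

/-- For a continuous homomorphism `λ : P → N`, the extension class `b_λ`
of `ℤ` by `v_r(N)` is split, i.e., there is a continuous `Φ : GL_n(F) → N` with
`Φ(g·p) = Φ(g) + λ(p)` whose left translates all differ from `Φ` by constants, if and only
if `λ` extends to a continuous homomorphism `GL_n(F) → N`. -/
theorem extension_class_trivial_iff_extends
    {F : Type*} [NontriviallyNormedField F] [IsUltrametricDist F]
    [CompleteSpace F] [LocallyCompactSpace F]
    {n r : ℕ} (hn : 2 ≤ n) (hr : 0 < r) (hrn : r < n)
    {N : Type*} [AddCommGroup N] [TopologicalSpace N] [IsTopologicalAddGroup N]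
    (lam : ↥(Parabolic F n r) → N) (hcont : Continuous lam)
    (hhom : ∀ p q : ↥(Parabolic F n r), lam (p * q) = lam p + lam q) :
    (∃ Φ : GL (Fin n) F → N, Continuous Φ ∧
        (∀ (g p : GL (Fin n) F) (hp : p ∈ Parabolic F n r), Φ (g * p) = Φ g + lam ⟨p, hp⟩) ∧
        (∀ g : GL (Fin n) F, ∃ c : N, ∀ g' : GL (Fin n) F, Φ (g * g') = c + Φ g')) ↔
    (∃ Lam : GL (Fin n) F → N, Continuous Lam ∧
        (∀ a b : GL (Fin n) F, Lam (a * b) = Lam a + Lam b) ∧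
        ∀ p : ↥(Parabolic F n r), Lam (p : GL (Fin n) F) = lam p) := by
  constructor
  · rintro ⟨Φ, hΦc, hΦp, hΦl⟩
    refine ⟨fun g => Φ g - Φ 1, by fun_prop, ?_, ?_⟩
    · intro a b
      obtain ⟨c, hc⟩ := hΦl a
      have h1 := hc 1
      rw [mul_one] at h1
      have h2 := hc b
      dsimp only
      rw [h2]
      have : c = Φ a - Φ 1 := by rw [h1]; abel
      rw [this]; abel
    · intro p
      have := hΦp 1 p p.2
      rw [one_mul] at this
      dsimp only
      rw [this]; abel
  · rintro ⟨Lam, hLc, hLh, hLe⟩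
    refine ⟨Lam, hLc, ?_, ?_⟩
    · intro g p hp
      rw [hLh, hLe ⟨p, hp⟩]
    · intro g
      exact ⟨Lam g, fun g' => hLh g g'⟩
end
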